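/- arXiv:2307.13557 — 6 statements merged into one kernel-verified Lean document; each statement's English description precedes it below -/
import Mathlib

section
/- Let Y and Z be real random variables with equal means and distribution functions F and G respectively. If there exists t₀ such that G(t) - F(t) ≥ 0 for all t < t₀ and G(t) - F(t) ≤ 0 for all t ≥ t₀ (single sign change +, −), then Y ≤_cx Z. -/
open MeasureTheory Set

/-- A lower set strictly below `t₀` has smaller `Y`-mass than `Z`-mass. -/
lemma aux_lower_set {Ω : Type*} [MeasurableSpace Ω] (μ : Measure Ω)
    (Y Z : Ω → ℝ) (t₀ : ℝ)
    (hsign : ∀ t : ℝ, t < t₀ → μ {ω | Y ω ≤ t} ≤ μ {ω | Z ω ≤ t})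
    (A : Set ℝ) (hA : A ⊆ Iio t₀)
    (hlow : ∀ ⦃x⦄, x ∈ A → ∀ ⦃x'⦄, x' ≤ x → x' ∈ A) :
    μ (Y ⁻¹' A) ≤ μ (Z ⁻¹' A) := by
  rcases A.eq_empty_or_nonempty with h | h
  · simp [h]
  have hbdd : BddAbove A := ⟨t₀, fun x hx => (hA hx).le⟩
  set s := sSup A with hs_def
  by_cases hs : s ∈ A
  · have hAe : A = Iic s :=
      subset_antisymm (fun x hx => le_csSup hbdd hx) (fun x hx => hlow hs hx)
    rw [hAe]
    exact hsign s (hA hs)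
  · have hslt : s ≤ t₀ := csSup_le h (fun x hx => (hA hx).le)
    have hAe : A = Iio s := by
      ext x
      constructor
      · intro hx
        exact lt_of_le_of_ne (le_csSup hbdd hx) (by rintro rfl; exact hs hx)
      · intro hx
        obtain ⟨a, ha, hxa⟩ := exists_lt_of_lt_csSup h hx
        exact hlow ha hxa.le
    rw [hAe]
    have key : ∀ X : Ω → ℝ, X ⁻¹' Iio s = ⋃ n : ℕ, {ω | X ω ≤ s - 1 / (n + 1)} := by
      intro X
      ext ω
      simp only [mem_preimage, mem_Iio, mem_iUnion, mem_setOf_eq]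
      constructor
      · intro hlt
        have hpos : 0 < s - X ω := sub_pos.2 hlt
        obtain ⟨n, hn⟩ := exists_nat_gt (1 / (s - X ω))
        refine ⟨n, ?_⟩
        have h1 : 1 / (s - X ω) < (n : ℝ) + 1 := hn.trans (lt_add_one _)
        have h2 : 1 < ((n : ℝ) + 1) * (s - X ω) := by
          rw [div_lt_iff₀ hpos] at h1; linarith
        have h3 : 1 / ((n : ℝ) + 1) < s - X ω := by
          rw [div_lt_iff₀ (by positivity : (0:ℝ) < (n:ℝ) + 1)]; linarith
        linarith
      · rintro ⟨n, hn⟩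
        have : (0:ℝ) < 1 / ((n : ℝ) + 1) := by positivity
        linarith
    have mono : ∀ X : Ω → ℝ, Monotone (fun n : ℕ => {ω | X ω ≤ s - 1 / (n + 1)}) := by
      intro X m n hmn ω hω
      simp only [mem_setOf_eq] at hω ⊢
      have h1 : (1:ℝ) / ((n : ℝ) + 1) ≤ 1 / ((m : ℝ) + 1) := by
        apply one_div_le_one_div_of_le (by positivity)
        exact_mod_cast by exact_mod_cast add_le_add_left (Nat.cast_le.2 hmn) 1
      linarith
    rw [key Y, key Z, Directed.measure_iUnion (mono Y).directed_le,
      Directed.measure_iUnion (mono Z).directed_le]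
    refine iSup_mono fun n => hsign _ ?_
    have : (0:ℝ) < 1 / ((n : ℝ) + 1) := by positivity
    linarith

/-- An upper set strictly above `t₀` has smaller `Y`-mass than `Z`-mass. -/
lemma aux_upper_set {Ω : Type*} [MeasurableSpace Ω] (μ : Measure Ω)
    [IsProbabilityMeasure μ]
    (Y Z : Ω → ℝ) (hYm : Measurable Y) (hZm : Measurable Z) (t₀ : ℝ)
    (hsign : ∀ t : ℝ, t₀ ≤ t → μ {ω | Z ω ≤ t} ≤ μ {ω | Y ω ≤ t})
    (B : Set ℝ) (hB : B ⊆ Ioi t₀)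
    (hup : ∀ ⦃x⦄, x ∈ B → ∀ ⦃x'⦄, x ≤ x' → x' ∈ B) :
    μ (Y ⁻¹' B) ≤ μ (Z ⁻¹' B) := by
  rcases B.eq_empty_or_nonempty with h | h
  · simp [h]
  have hbdd : BddBelow B := ⟨t₀, fun x hx => (hB hx).le⟩
  set b := sInf B with hb_def
  by_cases hbB : b ∈ B
  · -- B = Ici b with t₀ < b
    have hBe : B = Ici b :=
      subset_antisymm (fun x hx => csInf_le hbdd hx) (fun x hx => hup hbB hx)
    rw [hBe]
    have htb : t₀ < b := hB hbB
    -- compare via complements of Iio b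
    have key : ∀ X : Ω → ℝ, X ⁻¹' Iio b = ⋃ n : ℕ, {ω | X ω ≤ b - (b - t₀) / (n + 1)} := by
      intro X
      ext ω
      simp only [mem_preimage, mem_Iio, mem_iUnion, mem_setOf_eq]
      constructor
      · intro hlt
        have hpos : 0 < b - X ω := sub_pos.2 hlt
        obtain ⟨n, hn⟩ := exists_nat_gt ((b - t₀) / (b - X ω))
        refine ⟨n, ?_⟩
        have h1 : (b - t₀) / (b - X ω) < (n : ℝ) + 1 := hn.trans (lt_add_one _)
        have h2 : b - t₀ < ((n : ℝ) + 1) * (b - X ω) := by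
          rw [div_lt_iff₀ hpos] at h1; linarith
        have h3 : (b - t₀) / ((n : ℝ) + 1) < b - X ω := by
          rw [div_lt_iff₀ (by positivity : (0:ℝ) < (n:ℝ) + 1)]; linarith
        linarith
      · rintro ⟨n, hn⟩
        have : (0:ℝ) < (b - t₀) / ((n : ℝ) + 1) :=
          div_pos (by linarith) (by positivity)
        linarith
    have mono : ∀ X : Ω → ℝ, Monotone (fun n : ℕ => {ω | X ω ≤ b - (b - t₀) / (n + 1)}) := by
      intro X m n hmn ω hω
      simp only [mem_setOf_eq] at hω ⊢
      have h1 : (b - t₀) / ((n : ℝ) + 1) ≤ (b - t₀) / ((m : ℝ) + 1) := by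
        apply div_le_div_of_nonneg_left (by linarith) (by positivity)
        exact_mod_cast add_le_add_left (Nat.cast_le.2 hmn) 1
      linarith
    have hmlt : μ (Z ⁻¹' Iio b) ≤ μ (Y ⁻¹' Iio b) := by
      rw [key Y, key Z, Directed.measure_iUnion (mono Y).directed_le,
        Directed.measure_iUnion (mono Z).directed_le]
      refine iSup_mono fun n => hsign _ ?_
      have h1 : (b - t₀) / ((n : ℝ) + 1) ≤ (b - t₀) / 1 := by
        apply div_le_div_of_nonneg_left (by linarith) (by norm_num)
        have : (0:ℝ) ≤ (n:ℝ) := Nat.cast_nonneg n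
        linarith
      have h2 : (b - t₀) / 1 = b - t₀ := by ring
      linarith
    have hYc : Y ⁻¹' Ici b = (Y ⁻¹' Iio b)ᶜ := by
      ext ω; simp [not_lt]
    have hZc : Z ⁻¹' Ici b = (Z ⁻¹' Iio b)ᶜ := by
      ext ω; simp [not_lt]
    rw [hYc, hZc, measure_compl (hYm measurableSet_Iio) (measure_ne_top μ _),
      measure_compl (hZm measurableSet_Iio) (measure_ne_top μ _)]
    exact tsub_le_tsub_left hmlt _
  · -- B = Ioi b with t₀ ≤ b
    have htb : t₀ ≤ b := le_csInf h (fun x hx => (hB hx).le)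
    have hBe : B = Ioi b := by
      ext x
      constructor
      · intro hx
        exact lt_of_le_of_ne (csInf_le hbdd hx) (by rintro rfl; exact hbB hx)
      · intro hx
        obtain ⟨a, ha, hax⟩ := exists_lt_of_csInf_lt h hx
        exact hup ha hax.le
    rw [hBe]
    have hYc : Y ⁻¹' Ioi b = (Y ⁻¹' Iic b)ᶜ := by
      ext ω; simp [not_le]
    have hZc : Z ⁻¹' Ioi b = (Z ⁻¹' Iic b)ᶜ := by
      ext ω; simp [not_le]
    rw [hYc, hZc, measure_compl (hYm measurableSet_Iic) (measure_ne_top μ _),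
      measure_compl (hZm measurableSet_Iic) (measure_ne_top μ _)]
    exact tsub_le_tsub_left (hsign b htb) _

/-- Existence of a subgradient of a convex function on `ℝ` at any point. -/
lemma exists_subgradient_aux (φ : ℝ → ℝ) (hφ : ConvexOn ℝ Set.univ φ) (t₀ : ℝ) :
    ∃ c : ℝ, ∀ x : ℝ, φ t₀ + c * (x - t₀) ≤ φ x := by
  set S : Set ℝ := (fun y => (φ y - φ t₀) / (y - t₀)) '' Ioi t₀ with hS_def
  have hne : S.Nonempty := ⟨_, mem_image_of_mem _ (lt_add_one t₀)⟩
  have hbdd : BddBelow S := by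
    refine ⟨(φ t₀ - φ (t₀ - 1)) / (t₀ - (t₀ - 1)), ?_⟩
    rintro v ⟨y, hy, rfl⟩
    exact hφ.slope_mono_adjacent (mem_univ _) (mem_univ _) (by linarith) hy
  refine ⟨sInf S, fun x => ?_⟩
  rcases lt_trichotomy x t₀ with hx | hx | hx
  · have h1 : (φ t₀ - φ x) / (t₀ - x) ≤ sInf S := by
      refine le_csInf hne ?_
      rintro v ⟨y, hy, rfl⟩
      exact hφ.slope_mono_adjacent (mem_univ _) (mem_univ _) hx hy
    have hpos : (0:ℝ) < t₀ - x := by linarith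
    have h2 : φ t₀ - φ x ≤ sInf S * (t₀ - x) := (div_le_iff₀ hpos).1 h1
    have h3 : sInf S * (x - t₀) = -(sInf S * (t₀ - x)) := by ring
    linarith
  · subst hx; simp
  · have h1 : sInf S ≤ (φ x - φ t₀) / (x - t₀) := csInf_le hbdd ⟨x, hx, rfl⟩
    have hpos : (0:ℝ) < x - t₀ := by linarith
    have h2 : sInf S * (x - t₀) ≤ φ x - φ t₀ := (le_div_iff₀ hpos).1 h1
    linarith

/-- Main theorem for measurable `Y`, `Z`. -/
theorem single_crossing_main_meas
    {Ω : Type*} [MeasurableSpace Ω] (μ : Measure Ω) [IsProbabilityMeasure μ]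
    (Y Z : Ω → ℝ) (hYm : Measurable Y) (hZm : Measurable Z)
    (hY : Integrable Y μ) (hZ : Integrable Z μ)
    (hmean : ∫ ω, Y ω ∂μ = ∫ ω, Z ω ∂μ)
    (t₀ : ℝ)
    (hsign : ∀ t : ℝ,
      (t < t₀ → μ {ω | Y ω ≤ t} ≤ μ {ω | Z ω ≤ t}) ∧
      (t₀ ≤ t → μ {ω | Z ω ≤ t} ≤ μ {ω | Y ω ≤ t}))
    (φ : ℝ → ℝ) (hφ : ConvexOn ℝ Set.univ φ)
    (hφY : Integrable (fun ω => φ (Y ω)) μ)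
    (hφZ : Integrable (fun ω => φ (Z ω)) μ) :
    ∫ ω, φ (Y ω) ∂μ ≤ ∫ ω, φ (Z ω) ∂μ := by
  obtain ⟨c, hc⟩ := exists_subgradient_aux φ hφ t₀
  set ψ : ℝ → ℝ := fun x => φ x - (φ t₀ + c * (x - t₀)) with hψ_def
  have hψ0 : ∀ x, 0 ≤ ψ x := fun x => sub_nonneg.2 (hc x)
  have hψt₀ : ψ t₀ = 0 := by simp [hψ_def]
  have haff_concave : ConcaveOn ℝ Set.univ (fun x : ℝ => φ t₀ + c * (x - t₀)) := by
    refine ⟨convex_univ, fun x _ y _ a b ha hb hab => ?_⟩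
    simp only [smul_eq_mul]
    apply le_of_eq
    linear_combination (φ t₀ - c * t₀) * hab
  have hψconv : ConvexOn ℝ Set.univ ψ := hφ.sub haff_concave
  have hψcont : Continuous ψ := by
    have := hψconv.continuousOn isOpen_univ
    rw [← continuousOn_univ]
    exact this
  have haffY : Integrable (fun ω => φ t₀ + c * (Y ω - t₀)) μ :=
    (integrable_const _).add ((hY.sub (integrable_const t₀)).const_mul c)
  have haffZ : Integrable (fun ω => φ t₀ + c * (Z ω - t₀)) μ :=
    (integrable_const _).add ((hZ.sub (integrable_const t₀)).const_mul c)
  have hψY : Integrable (fun ω => ψ (Y ω)) μ := hφY.sub haffY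
  have hψZ : Integrable (fun ω => ψ (Z ω)) μ := hφZ.sub haffZ
  have haff_int : ∀ X : Ω → ℝ, Integrable X μ →
      ∫ ω, (φ t₀ + c * (X ω - t₀)) ∂μ = φ t₀ + c * ((∫ ω, X ω ∂μ) - t₀) := by
    intro X hX
    have hlin : Integrable (fun ω => c * (X ω - t₀)) μ := by
      have := (hX.sub (integrable_const t₀)).const_mul c
      simpa using this
    rw [integral_add (integrable_const _) hlin, integral_const_mul,
      integral_sub hX (integrable_const t₀), integral_const, integral_const]
    simp
  have haff_eq : ∫ ω, (φ t₀ + c * (Y ω - t₀)) ∂μ = ∫ ω, (φ t₀ + c * (Z ω - t₀)) ∂μ := by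
    rw [haff_int Y hY, haff_int Z hZ, hmean]
  have hsub : ∫ ω, ψ (Y ω) ∂μ ≤ ∫ ω, ψ (Z ω) ∂μ := by
    rw [integral_eq_lintegral_of_nonneg_ae (ae_of_all _ fun ω => hψ0 (Y ω)) hψY.1,
      integral_eq_lintegral_of_nonneg_ae (ae_of_all _ fun ω => hψ0 (Z ω)) hψZ.1]
    have hfin : ∫⁻ ω, ENNReal.ofReal (ψ (Z ω)) ∂μ ≠ ⊤ := by
      refine ne_of_lt (lt_of_le_of_lt (lintegral_mono fun ω => ?_) hψZ.2)
      rw [← ofReal_norm, Real.norm_eq_abs]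
      exact ENNReal.ofReal_le_ofReal (le_abs_self _)
    refine ENNReal.toReal_mono hfin ?_
    rw [lintegral_eq_lintegral_meas_lt μ (ae_of_all _ fun ω => hψ0 (Y ω))
        (hψcont.measurable.comp hYm).aemeasurable,
      lintegral_eq_lintegral_meas_lt μ (ae_of_all _ fun ω => hψ0 (Z ω))
        (hψcont.measurable.comp hZm).aemeasurable]
    refine lintegral_mono_ae ((ae_restrict_iff' measurableSet_Ioi).2 (ae_of_all _ fun u hu => ?_))
    have hu0 : (0:ℝ) < u := hu
    -- key pointwise comparison
    set A : Set ℝ := {x | u < ψ x ∧ x < t₀} with hA_def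
    set B : Set ℝ := {x | u < ψ x ∧ t₀ < x} with hB_def
    have hset : ∀ x : ℝ, u < ψ x ↔ x ∈ A ∪ B := by
      intro x
      constructor
      · intro hx
        rcases lt_trichotomy x t₀ with h | h | h
        · exact Or.inl ⟨hx, h⟩
        · exfalso; rw [h, hψt₀] at hx; linarith
        · exact Or.inr ⟨hx, h⟩
      · rintro (⟨hx, _⟩ | ⟨hx, _⟩) <;> exact hx
    have hAlow : ∀ ⦃x⦄, x ∈ A → ∀ ⦃x'⦄, x' ≤ x → x' ∈ A := by
      rintro x ⟨hx1, hx2⟩ x' hx'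
      refine ⟨?_, lt_of_le_of_lt hx' hx2⟩
      have hseg : x ∈ segment ℝ x' t₀ := by
        rw [segment_eq_Icc (le_trans hx' hx2.le)]
        exact ⟨hx', hx2.le⟩
      have := hψconv.le_on_segment (mem_univ x') (mem_univ t₀) hseg
      rw [hψt₀] at this
      calc u < ψ x := hx1
        _ ≤ max (ψ x') 0 := this
        _ = ψ x' := max_eq_left (hψ0 x')
    have hBup : ∀ ⦃x⦄, x ∈ B → ∀ ⦃x'⦄, x ≤ x' → x' ∈ B := by
      rintro x ⟨hx1, hx2⟩ x' hx'
      refine ⟨?_, lt_of_lt_of_le hx2 hx'⟩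
      have hseg : x ∈ segment ℝ t₀ x' := by
        rw [segment_eq_Icc (le_trans hx2.le hx')]
        exact ⟨hx2.le, hx'⟩
      have := hψconv.le_on_segment (mem_univ t₀) (mem_univ x') hseg
      rw [hψt₀] at this
      calc u < ψ x := hx1
        _ ≤ max 0 (ψ x') := this
        _ = ψ x' := max_eq_right (hψ0 x')
    have hBmeas : MeasurableSet B := by
      have h1 : MeasurableSet {x : ℝ | u < ψ x} := measurableSet_lt measurable_const hψcont.measurable
      have h2 : B = {x : ℝ | u < ψ x} ∩ Ioi t₀ := by
        ext x; simp [hB_def, mem_setOf_eq, and_comm]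
      rw [h2]
      exact h1.inter measurableSet_Ioi
    have hYeq : {ω | u < ψ (Y ω)} = Y ⁻¹' A ∪ Y ⁻¹' B := by
      ext ω; simp only [mem_setOf_eq, mem_union, mem_preimage]
      exact (hset (Y ω)).trans (by rfl)
    have hZeq : {ω | u < ψ (Z ω)} = Z ⁻¹' A ∪ Z ⁻¹' B := by
      ext ω; simp only [mem_setOf_eq, mem_union, mem_preimage]
      exact (hset (Z ω)).trans (by rfl)
    have hdisj : Disjoint (Z ⁻¹' A) (Z ⁻¹' B) := by
      rw [Set.disjoint_left]
      rintro ω ⟨_, h1⟩ ⟨_, h2⟩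
      exact absurd (h1.trans h2) (lt_irrefl _)
    calc μ {ω | u < ψ (Y ω)} = μ (Y ⁻¹' A ∪ Y ⁻¹' B) := by rw [hYeq]
      _ ≤ μ (Y ⁻¹' A) + μ (Y ⁻¹' B) := measure_union_le _ _
      _ ≤ μ (Z ⁻¹' A) + μ (Z ⁻¹' B) := by
          refine add_le_add ?_ ?_
          · exact aux_lower_set μ Y Z t₀ (fun t ht => (hsign t).1 ht) A
              (fun x hx => hx.2) hAlow
          · exact aux_upper_set μ Y Z hYm hZm t₀ (fun t ht => (hsign t).2 ht) B
              (fun x hx => hx.2) hBup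
      _ = μ (Z ⁻¹' A ∪ Z ⁻¹' B) := (measure_union hdisj (hZm hBmeas)).symm
      _ = μ {ω | u < ψ (Z ω)} := by rw [hZeq]
  -- conclude
  have hYdecomp : ∫ ω, ψ (Y ω) ∂μ = ∫ ω, φ (Y ω) ∂μ - ∫ ω, (φ t₀ + c * (Y ω - t₀)) ∂μ :=
    integral_sub hφY haffY
  have hZdecomp : ∫ ω, ψ (Z ω) ∂μ = ∫ ω, φ (Z ω) ∂μ - ∫ ω, (φ t₀ + c * (Z ω - t₀)) ∂μ :=
    integral_sub hφZ haffZ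
  rw [hYdecomp, hZdecomp, haff_eq] at hsub
  linarith

/-- If `Y` and `Z` have equal means and the difference of distribution functions
`G - F` has a single sign change `+,-` (at `t₀`), then `Y ≤_cx Z`. -/
theorem single_crossing_implies_convex_order
    {Ω : Type*} [MeasurableSpace Ω] (μ : Measure Ω) [IsProbabilityMeasure μ]
    (Y Z : Ω → ℝ) (hY : Integrable Y μ) (hZ : Integrable Z μ)
    (hmean : ∫ ω, Y ω ∂μ = ∫ ω, Z ω ∂μ)
    (t₀ : ℝ)
    (hsign : ∀ t : ℝ,
      (t < t₀ → μ {ω | Y ω ≤ t} ≤ μ {ω | Z ω ≤ t}) ∧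
      (t₀ ≤ t → μ {ω | Z ω ≤ t} ≤ μ {ω | Y ω ≤ t}))
    (φ : ℝ → ℝ) (hφ : ConvexOn ℝ Set.univ φ)
    (hφY : Integrable (fun ω => φ (Y ω)) μ)
    (hφZ : Integrable (fun ω => φ (Z ω)) μ) :
    ∫ ω, φ (Y ω) ∂μ ≤ ∫ ω, φ (Z ω) ∂μ := by
  set Y' := hY.1.mk Y with hY'_def
  set Z' := hZ.1.mk Z with hZ'_def
  have hY'm : Measurable Y' := hY.1.stronglyMeasurable_mk.measurable
  have hZ'm : Measurable Z' := hZ.1.stronglyMeasurable_mk.measurable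
  have hYae : Y =ᵐ[μ] Y' := hY.1.ae_eq_mk
  have hZae : Z =ᵐ[μ] Z' := hZ.1.ae_eq_mk
  have hY' : Integrable Y' μ := hY.congr hYae
  have hZ' : Integrable Z' μ := hZ.congr hZae
  have hφYae : (fun ω => φ (Y ω)) =ᵐ[μ] fun ω => φ (Y' ω) := hYae.mono fun ω h => by simp only [h]
  have hφZae : (fun ω => φ (Z ω)) =ᵐ[μ] fun ω => φ (Z' ω) := hZae.mono fun ω h => by simp only [h]
  have hφY' : Integrable (fun ω => φ (Y' ω)) μ := hφY.congr hφYae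
  have hφZ' : Integrable (fun ω => φ (Z' ω)) μ := hφZ.congr hφZae
  have hmean' : ∫ ω, Y' ω ∂μ = ∫ ω, Z' ω ∂μ := by
    rw [← integral_congr_ae hYae, ← integral_congr_ae hZae]; exact hmean
  have hsign' : ∀ t : ℝ,
      (t < t₀ → μ {ω | Y' ω ≤ t} ≤ μ {ω | Z' ω ≤ t}) ∧
      (t₀ ≤ t → μ {ω | Z' ω ≤ t} ≤ μ {ω | Y' ω ≤ t}) := by
    intro t
    have hYset : μ {ω | Y' ω ≤ t} = μ {ω | Y ω ≤ t} :=
      measure_congr (hYae.mono fun ω h => by change (Y' ω ≤ t) = (Y ω ≤ t); rw [h])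
    have hZset : μ {ω | Z' ω ≤ t} = μ {ω | Z ω ≤ t} :=
      measure_congr (hZae.mono fun ω h => by change (Z' ω ≤ t) = (Z ω ≤ t); rw [h])
    rw [hYset, hZset]
    exact hsign t
  calc ∫ ω, φ (Y ω) ∂μ = ∫ ω, φ (Y' ω) ∂μ := integral_congr_ae hφYae
    _ ≤ ∫ ω, φ (Z' ω) ∂μ :=
        single_crossing_main_meas μ Y' Z' hY'm hZ'm hY' hZ' hmean' t₀ hsign' φ hφ hφY' hφZ'
    _ = ∫ ω, φ (Z ω) ∂μ := (integral_congr_ae hφZae).symm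
end

section
/- Let X ~ Bernoulli(p) and Y ~ Bernoulli(q) with 0 < p ≤ q ≤ 1. Then Y/q ≤_cx X/p, i.e., for every convex function φ, (1-q)·φ(0) + q·φ(1/q) ≤ (1-p)·φ(0) + p·φ(1/p). -/
open Set

/-- For Bernoulli variables `X ~ Ber(p)`, `Y ~ Ber(q)` with `0 < p ≤ q ≤ 1`,
`Y/q ≤_cx X/p`. -/
theorem bernoulli_scaled_convex_order (p q : ℝ) (hp : 0 < p) (hpq : p ≤ q) (hq : q ≤ 1)
    (φ : ℝ → ℝ) (hφ : ConvexOn ℝ Set.univ φ) :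
    (1 - q) * φ 0 + q * φ (1 / q) ≤ (1 - p) * φ 0 + p * φ (1 / p) := by
  have hq0 : 0 < q := hp.trans_le hpq
  have hb : 0 ≤ p / q := div_nonneg hp.le hq0.le
  have hb1 : p / q ≤ 1 := (div_le_one hq0).mpr hpq
  have key := hφ.2 (mem_univ (0 : ℝ)) (mem_univ (1 / p))
    (by linarith : (0:ℝ) ≤ 1 - p / q) hb (by ring)
  have hx : (1 - p / q) • (0:ℝ) + (p / q) • (1 / p) = 1 / q := by
    simp only [smul_eq_mul]; field_simp [hp.ne', hq0.ne']; ring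
  rw [hx] at key
  have key' : q * φ (1 / q) ≤ (q - p) * φ 0 + p * φ (1 / p) := by
    have := mul_le_mul_of_nonneg_left key hq0.le
    simp only [smul_eq_mul] at this
    calc q * φ (1 / q) ≤ q * ((1 - p / q) * φ 0 + p / q * φ (1 / p)) := this
      _ = (q - p) * φ 0 + p * φ (1 / p) := by field_simp
  linarith
end

section
/- Let U₁, …, U_k be i.i.d. Uniform[0,1] random variables with k ≥ 2. Then 2/k ≤ E[1/(U₁ + ⋯ + U_k)] ≤ 2/(k-1). -/
open MeasureTheory Set Real

lemma lintegral_pi_pow (μ : Measure ℝ) [SigmaFinite μ] {f : ℝ → ENNReal} (hf : Measurable f)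
    (n : ℕ) :
    ∫⁻ x : Fin n → ℝ, ∏ i, f (x i) ∂(Measure.pi fun _ => μ) = (∫⁻ x, f x ∂μ) ^ n := by
  induction n with
  | zero => simp [Measure.pi_of_empty (fun _ : Fin 0 => μ)]
  | succ n ih =>
      have h := (measurePreserving_piFinSuccAbove (fun _ : Fin (n+1) => μ) 0).lintegral_comp
        (f := fun p : ℝ × (Fin n → ℝ) => f p.1 * ∏ i, f (p.2 i))
        (by fun_prop)
      have he : ∀ x : Fin (n+1) → ℝ,
          (f ((MeasurableEquiv.piFinSuccAbove (fun _ => ℝ) 0 x).1) *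
            ∏ i, f ((MeasurableEquiv.piFinSuccAbove (fun _ => ℝ) 0 x).2 i))
          = ∏ i, f (x i) := by
        intro x
        rw [Fin.prod_univ_succ]
        rfl
      simp_rw [he] at h
      rw [h, lintegral_prod_mul hf.aemeasurable (g := fun y : Fin n → ℝ => ∏ i, f (y i)) (Finset.measurable_prod _ fun i _ => hf.comp (measurable_pi_apply i)).aemeasurable, ih, pow_succ, mul_comm]

lemma pi_restrict (k : ℕ) :
    (Measure.pi fun _ : Fin k => (volume : Measure ℝ).restrict (Icc 0 1)) =
      (volume : Measure (Fin k → ℝ)).restrict (univ.pi fun _ => Icc 0 1) := by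
  refine Measure.pi_eq fun s hs => ?_
  rw [Measure.restrict_apply (MeasurableSet.univ_pi hs),
    ← Set.pi_inter_distrib, volume_pi, Measure.pi_pi]
  simp [Measure.restrict_apply (hs _)]

lemma lint_exp {s : ℝ} (hs : 0 < s) :
    ∫⁻ t in Ioi (0:ℝ), ENNReal.ofReal (exp (-(s*t))) = ENNReal.ofReal s⁻¹ := by
  have hint : IntegrableOn (fun t => exp (-(s*t))) (Ioi (0:ℝ)) := by
    have := exp_neg_integrableOn_Ioi 0 hs
    simpa [neg_mul] using this
  rw [← MeasureTheory.ofReal_integral_eq_lintegral_ofReal hint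
    (Filter.Eventually.of_forall fun t => (exp_pos _).le)]
  congr 1
  have := integral_comp_mul_left_Ioi (fun x => exp (-x)) 0 hs
  simp only [mul_zero] at this
  rw [this, integral_exp_neg_Ioi]
  simp

lemma int_exp_Icc {t : ℝ} (ht : 0 < t) :
    ∫ u in Icc (0:ℝ) 1, exp (-(t*u)) = (1 - exp (-t))/t := by
  rw [MeasureTheory.integral_Icc_eq_integral_Ioc,
    ← intervalIntegral.integral_of_le zero_le_one]
  have h1 : ∫ u in (0:ℝ)..1, exp (-(t*u)) = ∫ u in (0:ℝ)..1, (fun x => exp (-x)) (t*u) := rfl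
  rw [h1, intervalIntegral.integral_comp_mul_left (fun x => exp (-x)) ht.ne']
  rw [intervalIntegral.integral_comp_neg fun x => exp x]
  rw [integral_exp]
  simp [mul_comm, sub_eq_add_neg, div_eq_inv_mul]

lemma ineq_lower {t : ℝ} (ht : 0 < t) : exp (-(t/2)) ≤ (1 - exp (-t))/t := by
  rw [le_div_iff₀ ht]
  have h1 : t/2 < Real.sinh (t/2) := Real.self_lt_sinh_iff.mpr (by linarith)
  rw [Real.sinh_eq] at h1
  have h2 : (0:ℝ) < exp (-(t/2)) := exp_pos _
  have h3 : exp (-(t/2)) * exp (t/2) = 1 := by rw [← exp_add]; simp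
  have h4 : exp (-(t/2)) * exp (-(t/2)) = exp (-t) := by rw [← exp_add]; ring_nf
  nlinarith [h2, h1, h3, h4]

lemma ineq_upper {t : ℝ} (ht : 0 < t) : (1 - exp (-t))/t ≤ 2/(2+t) := by
  have key : 0 ≤ (2+t) * exp (-t) + t - 2 := by
    have hmono : MonotoneOn (fun s : ℝ => (2+s) * exp (-s) + s - 2) (Ici 0) := by
      have hd : ∀ s : ℝ, HasDerivAt (fun s : ℝ => (2+s) * exp (-s) + s - 2)
          (1 * exp (-s) + (2+s) * (exp (-s) * (-1)) + 1) s := by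
        intro s
        have he : HasDerivAt (fun s : ℝ => exp (-s)) (exp (-s) * (-1)) s :=
          (Real.hasDerivAt_exp (-s)).comp s (hasDerivAt_neg s)
        exact ((((hasDerivAt_id s).const_add 2).mul he).add (hasDerivAt_id s)).sub_const 2
      apply monotoneOn_of_deriv_nonneg (convex_Ici 0)
      · exact (Continuous.continuousOn (by continuity))
      · exact fun s _ => ((hd s).differentiableAt).differentiableWithinAt
      · intro s _
        rw [(hd s).deriv]
        have h5 : (1 + s) * exp (-s) ≤ 1 := by
          have := Real.add_one_le_exp s
          have h6 : exp (-s) * exp s = 1 := by rw [← exp_add]; simp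
          nlinarith [exp_pos (-s)]
        nlinarith [h5]
    have := hmono (self_mem_Ici) (show t ∈ Ici (0:ℝ) from ht.le) ht.le
    simpa using this
  rw [div_le_div_iff₀ ht (by linarith)]
  nlinarith [key]

lemma lint_upper_final {k : ℕ} (hk : 2 ≤ k) :
    ∫⁻ t in Ioi (0:ℝ), (ENNReal.ofReal (2/(2+t)))^k = ENNReal.ofReal (2/((k:ℝ)-1)) := by
  have hmp : MeasurePreserving (fun t : ℝ => t + 2) volume volume :=
    measurePreserving_add_right volume 2
  have hF : Measurable (fun u : ℝ => (ENNReal.ofReal (2/u))^k) := by fun_prop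
  have h1 := hmp.setLIntegral_comp_preimage (s := Ioi (2:ℝ)) measurableSet_Ioi hF
  have hpre : (fun t : ℝ => t + 2) ⁻¹' Ioi 2 = Ioi 0 := by ext x; simp only [mem_preimage, mem_Ioi]; constructor <;> intro <;> linarith
  rw [hpre] at h1
  have h2 : ∫⁻ t in Ioi (0:ℝ), (ENNReal.ofReal (2/(2+t)))^k
      = ∫⁻ t in Ioi (0:ℝ), (ENNReal.ofReal (2/(t+2)))^k := by
    congr 1; ext t; rw [add_comm]
  rw [h2, h1]
  -- now compute ∫⁻ u in Ioi 2, (ofReal (2/u))^k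
  have hcongr : ∫⁻ u in Ioi (2:ℝ), (ENNReal.ofReal (2/u))^k
      = ∫⁻ u in Ioi (2:ℝ), ENNReal.ofReal (2^k * u^(-(k:ℝ))) := by
    apply setLIntegral_congr_fun measurableSet_Ioi
    intro u hu; dsimp only
    rw [mem_Ioi] at hu
    have hu0 : (0:ℝ) < u := by linarith
    rw [← ENNReal.ofReal_pow (by positivity), div_pow, Real.rpow_neg hu0.le,
      Real.rpow_natCast]
    ring_nf
  rw [hcongr]
  have hint : IntegrableOn (fun u : ℝ => 2^k * u^(-(k:ℝ))) (Ioi (2:ℝ)) := by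
    apply Integrable.const_mul
    exact integrableOn_Ioi_rpow_of_lt (by norm_num; omega) (by norm_num)
  rw [← MeasureTheory.ofReal_integral_eq_lintegral_ofReal hint ?_]
  · congr 1
    rw [integral_const_mul, integral_Ioi_rpow_of_lt (by norm_num; omega) (by norm_num)]
    have hc : ((2:ℝ)^k : ℝ) = (2:ℝ) ^ ((k:ℝ)) := (Real.rpow_natCast 2 k).symm
    have hprod : (2:ℝ) ^ ((k:ℝ)) * (2:ℝ) ^ (-(k:ℝ)+1) = 2 := by
      rw [← Real.rpow_add (by norm_num)]; norm_num
    have hk1 : (k:ℝ) - 1 ≠ 0 := by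
      have : (2:ℝ) ≤ (k:ℝ) := by exact_mod_cast hk
      intro h; rw [sub_eq_zero] at h; linarith
    rw [hc]
    have e0 : (-(k:ℝ)+1) = -((k:ℝ)-1) := by ring
    have e1 : -(2:ℝ) ^ (-(k:ℝ)+1) / (-(k:ℝ)+1) = (2:ℝ)^(-(k:ℝ)+1) / ((k:ℝ)-1) := by
      rw [e0, neg_div_neg_eq]
    rw [e1, ← mul_div_assoc, hprod]
  · filter_upwards [ae_restrict_mem measurableSet_Ioi] with u hu
    rw [mem_Ioi] at hu
    positivity

lemma lint_lower_final {k : ℕ} (hk : 2 ≤ k) :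
    ∫⁻ t in Ioi (0:ℝ), (ENNReal.ofReal (exp (-(t/2))))^k = ENNReal.ofReal (2/(k:ℝ)) := by
  have hk0 : (0:ℝ) < (k:ℝ)/2 := by
    have : (2:ℝ) ≤ k := by exact_mod_cast hk
    linarith
  have he : ∀ t : ℝ, (ENNReal.ofReal (exp (-(t/2))))^k
      = ENNReal.ofReal (exp (-(((k:ℝ)/2)*t))) := by
    intro t
    rw [← ENNReal.ofReal_pow (exp_pos _).le, ← Real.exp_nat_mul]
    congr 2
    ring
  simp_rw [he]
  rw [lint_exp hk0]
  congr 1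
  field_simp

/-- For `U₁,…,U_k` i.i.d. Uniform[0,1] with `k ≥ 2`,
`2/k ≤ E[1/(U₁+⋯+U_k)] ≤ 2/(k-1)`. -/
theorem uniform_sum_inverse_moment_bounds (k : ℕ) (hk : 2 ≤ k) :
    2 / (k : ℝ) ≤
      (∫ x in (Set.univ.pi fun _ : Fin k => Set.Icc (0:ℝ) 1), (∑ i, x i)⁻¹) ∧
    (∫ x in (Set.univ.pi fun _ : Fin k => Set.Icc (0:ℝ) 1), (∑ i, x i)⁻¹) ≤
      2 / ((k : ℝ) - 1) := by
  have hk2 : (2:ℝ) ≤ (k:ℝ) := by exact_mod_cast hk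
  set B : Set (Fin k → ℝ) := univ.pi fun _ => Icc (0:ℝ) 1 with hB
  have hBmeas : MeasurableSet B := MeasurableSet.univ_pi fun _ => measurableSet_Icc
  have hSmeas : Measurable (fun x : Fin k → ℝ => ∑ i, x i) :=
    Finset.measurable_sum _ fun i _ => measurable_pi_apply i
  have i0 : Fin k := ⟨0, by omega⟩
  have hne : ∀ᵐ x : Fin k → ℝ, x i0 ≠ 0 := by
    rw [volume_pi]
    exact Measure.ae_eval_ne _ i0 0
  have hmem : ∀ᵐ x ∂(volume.restrict B), x ∈ B := ae_restrict_mem hBmeas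
  have hpos : ∀ᵐ x ∂(volume.restrict B), 0 < ∑ i, x i := by
    filter_upwards [hmem, ae_restrict_of_ae hne] with x hx hx0
    have hxi : ∀ i, 0 ≤ x i := fun i => (hx i (mem_univ i)).1
    have h1 : x i0 ≤ ∑ i, x i := Finset.single_le_sum (fun i _ => hxi i) (Finset.mem_univ i0)
    have h2 : 0 < x i0 := lt_of_le_of_ne (hxi i0) (Ne.symm hx0)
    linarith
  have hnonneg : 0 ≤ᵐ[volume.restrict B] fun x => (∑ i, x i)⁻¹ :=
    hpos.mono fun x hx => (inv_pos.mpr hx).le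
  set L := ∫⁻ x in B, ENNReal.ofReal ((∑ i, x i)⁻¹) with hLdef
  have hIeq : (∫ x in B, (∑ i, x i)⁻¹) = L.toReal := by
    rw [integral_eq_lintegral_of_nonneg_ae hnonneg hSmeas.inv.aestronglyMeasurable]
  have key : L = ∫⁻ t in Ioi (0:ℝ),
      (∫⁻ u in Icc (0:ℝ) 1, ENNReal.ofReal (exp (-(t*u))))^k := by
    have step1 : L = ∫⁻ x in B, ∫⁻ t in Ioi (0:ℝ),
        ENNReal.ofReal (exp (-((∑ i, x i)*t))) := by
      refine lintegral_congr_ae (hpos.mono fun x hx => ?_)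
      exact (lint_exp hx).symm
    have hmeasF : AEMeasurable
        (Function.uncurry fun (x : Fin k → ℝ) (t : ℝ) => ENNReal.ofReal (exp (-((∑ i, x i)*t))))
        ((volume.restrict B).prod (volume.restrict (Ioi 0))) := by
      apply Measurable.aemeasurable
      apply Measurable.ennreal_ofReal
      exact (((hSmeas.comp measurable_fst).mul measurable_snd).neg).exp
    rw [step1, lintegral_lintegral_swap hmeasF]
    have inner : ∀ t : ℝ, (∫⁻ x in B, ENNReal.ofReal (exp (-((∑ i, x i)*t))))
        = (∫⁻ u in Icc (0:ℝ) 1, ENNReal.ofReal (exp (-(t*u))))^k := by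
      intro t
      have e1 : ∀ x : Fin k → ℝ, ENNReal.ofReal (exp (-((∑ i, x i)*t)))
          = ∏ i, ENNReal.ofReal (exp (-(t * x i))) := by
        intro x
        rw [← ENNReal.ofReal_prod_of_nonneg (fun i _ => (exp_pos _).le), ← Real.exp_sum]
        congr 2
        rw [Finset.sum_mul, ← Finset.sum_neg_distrib]
        exact Finset.sum_congr rfl fun i _ => by ring
      simp_rw [e1]
      have hres : (volume : Measure (Fin k → ℝ)).restrict B
          = Measure.pi fun _ : Fin k => (volume : Measure ℝ).restrict (Icc 0 1) :=
        (pi_restrict k).symm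
      rw [← lintegral_pi_pow ((volume : Measure ℝ).restrict (Icc 0 1))
        (f := fun u => ENNReal.ofReal (exp (-(t*u))))
        (by exact (measurable_const.mul measurable_id).neg.exp.ennreal_ofReal) k]
      rw [← hres]
    simp_rw [inner]
  have hg : ∀ t : ℝ, 0 < t → (∫⁻ u in Icc (0:ℝ) 1, ENNReal.ofReal (exp (-(t*u))))
      = ENNReal.ofReal ((1 - exp (-t))/t) := by
    intro t ht
    have hint : IntegrableOn (fun u => exp (-(t*u))) (Icc (0:ℝ) 1) :=
      (Continuous.integrableOn_Icc (by continuity))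
    rw [← MeasureTheory.ofReal_integral_eq_lintegral_ofReal hint
      (Filter.Eventually.of_forall fun u => (exp_pos _).le), int_exp_Icc ht]
  have hupper : L ≤ ENNReal.ofReal (2/((k:ℝ)-1)) := by
    rw [key, ← lint_upper_final hk]
    refine lintegral_mono_ae ?_
    filter_upwards [ae_restrict_mem measurableSet_Ioi] with t ht
    rw [mem_Ioi] at ht
    rw [hg t ht]
    exact pow_le_pow_left' (ENNReal.ofReal_le_ofReal (ineq_upper ht)) k
  have hlower : ENNReal.ofReal (2/(k:ℝ)) ≤ L := by
    rw [key, ← lint_lower_final hk]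
    refine lintegral_mono_ae ?_
    filter_upwards [ae_restrict_mem measurableSet_Ioi] with t ht
    rw [mem_Ioi] at ht
    rw [hg t ht]
    exact pow_le_pow_left' (ENNReal.ofReal_le_ofReal (ineq_lower ht)) k
  have hLtop : L ≠ ⊤ := (lt_of_le_of_lt hupper ENNReal.ofReal_lt_top).ne
  constructor
  · rw [hIeq, ← ENNReal.toReal_ofReal (show (0:ℝ) ≤ 2/(k:ℝ) by positivity)]
    exact ENNReal.toReal_mono hLtop hlower
  · rw [hIeq]
    calc L.toReal ≤ (ENNReal.ofReal (2/((k:ℝ)-1))).toReal :=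
          ENNReal.toReal_mono ENNReal.ofReal_ne_top hupper
      _ = 2/((k:ℝ)-1) := ENNReal.toReal_ofReal (by
          have : (0:ℝ) < (k:ℝ) - 1 := by linarith
          positivity)
end

section
/- Suppose p₁, …, pₘ are mutually independent random variables in [0,1] and for each index h in a set H₀ of size m₀ ≥ 1, pₕ is super-uniform (P(pₕ ≤ t) ≤ t for all t ∈ [0,1]). Let g : [0,1] → [0,1] be non-decreasing with ν = E[g(U)] > 0 for U ~ Uniform[0,1], and define m̂₀(p) = (1 + Σᵢ g(pᵢ))/ν. Then for every h ∈ H₀, E[1/m̂₀(p_{0,h})] ≤ 1/m₀, where p_{0,h} is the vector p with pₕ replaced by 0. -/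
open MeasureTheory Set ProbabilityTheory
open scoped ENNReal

noncomputable def lebUnif : Measure ℝ := volume.restrict (Set.Icc 0 1)

instance : IsProbabilityMeasure lebUnif :=
  ⟨by simp [lebUnif, Real.volume_Icc]⟩

lemma imc_meas_lowerSet_le (ρ : Measure ℝ) [IsProbabilityMeasure ρ]
    (h01 : ρ (Set.Icc (0:ℝ) 1)ᶜ = 0)
    (hsup : ∀ t ∈ Set.Icc (0:ℝ) 1, ρ (Set.Iic t) ≤ ENNReal.ofReal t)
    (S : Set ℝ) (hS : IsLowerSet S) : ρ S ≤ lebUnif S := by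
  rcases S.eq_empty_or_nonempty with rfl | hne
  · simp
  by_cases hb : BddAbove S
  · set c := sSup S with hc
    have hsub : S ⊆ Set.Iic c := fun x hx => le_csSup hb hx
    have hsub2 : Set.Iio c ⊆ S := by
      intro y hy
      obtain ⟨x, hxS, hyx⟩ := exists_lt_of_lt_csSup hne hy
      exact hS hyx.le hxS
    rcases lt_or_ge c 0 with hc0 | hc0
    · have : ρ S = 0 := by
        refine measure_mono_null (fun x hx => ?_) h01
        intro hx'
        exact absurd (le_trans hx'.1 (hsub hx)) (not_le.mpr hc0)
      simp [this]
    rcases le_or_gt c 1 with hc1 | hc1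
    · calc ρ S ≤ ρ (Set.Iic c) := measure_mono hsub
        _ ≤ ENNReal.ofReal c := hsup c ⟨hc0, hc1⟩
        _ = lebUnif (Set.Iio c) := by
            rw [lebUnif, Measure.restrict_apply measurableSet_Iio]
            have : Set.Iio c ∩ Set.Icc 0 1 = Set.Ico 0 c := by
              ext x
              simp only [Set.mem_inter_iff, Set.mem_Iio, Set.mem_Icc, Set.mem_Ico]
              constructor
              · rintro ⟨h1, h2, _⟩; exact ⟨h2, h1⟩
              · rintro ⟨h1, h2⟩; exact ⟨h2, h1, le_trans h2.le hc1⟩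
            rw [this, Real.volume_Ico, sub_zero]
        _ ≤ lebUnif S := measure_mono hsub2
    · calc ρ S ≤ 1 := prob_le_one
        _ = lebUnif (Set.Icc 0 1) := by
            rw [lebUnif, Measure.restrict_apply measurableSet_Icc, Set.inter_self,
              Real.volume_Icc]; norm_num
        _ ≤ lebUnif S := measure_mono (fun x hx => hsub2 (lt_of_le_of_lt hx.2 hc1))
  · have hS' : S = Set.univ := by
      apply Set.eq_univ_of_forall
      intro x
      obtain ⟨y, hyS, hxy⟩ := not_bddAbove_iff.mp hb x
      exact hS hxy.le hyS
    subst hS'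
    simp [measure_univ]

lemma imc_lintegral_antitone_le (ρ : Measure ℝ) [IsProbabilityMeasure ρ]
    (h01 : ρ (Set.Icc (0:ℝ) 1)ᶜ = 0)
    (hsup : ∀ t ∈ Set.Icc (0:ℝ) 1, ρ (Set.Iic t) ≤ ENNReal.ofReal t)
    (f : ℝ → ℝ) (hf : Antitone f) (hf0 : ∀ x, 0 ≤ f x) :
    ∫⁻ x, ENNReal.ofReal (f x) ∂ρ ≤ ∫⁻ x, ENNReal.ofReal (f x) ∂lebUnif := by
  rw [lintegral_eq_lintegral_meas_lt ρ (Filter.Eventually.of_forall hf0)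
      hf.measurable.aemeasurable,
    lintegral_eq_lintegral_meas_lt lebUnif (Filter.Eventually.of_forall hf0)
      hf.measurable.aemeasurable]
  refine lintegral_mono fun t => ?_
  exact imc_meas_lowerSet_le ρ h01 hsup _ (fun a b hba ha => lt_of_lt_of_le ha (hf hba))

lemma imc_lintegral_antitone_le' (ρ : Measure ℝ) [IsProbabilityMeasure ρ]
    (h01 : ρ (Set.Icc (0:ℝ) 1)ᶜ = 0)
    (hsup : ∀ t ∈ Set.Icc (0:ℝ) 1, ρ (Set.Iic t) ≤ ENNReal.ofReal t)
    (φ : ℝ → ℝ≥0∞) (hφ : Antitone φ) (C : ℝ≥0∞) (hC : C ≠ ⊤) (hφC : ∀ x, φ x ≤ C) :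
    ∫⁻ x, φ x ∂ρ ≤ ∫⁻ x, φ x ∂lebUnif := by
  have hfin : ∀ x, φ x ≠ ⊤ := fun x => ne_top_of_le_ne_top hC (hφC x)
  have hrepr : ∀ x, φ x = ENNReal.ofReal ((φ x).toReal) := fun x =>
    (ENNReal.ofReal_toReal (hfin x)).symm
  calc ∫⁻ x, φ x ∂ρ = ∫⁻ x, ENNReal.ofReal ((φ x).toReal) ∂ρ := by
        simp_rw [← hrepr]
    _ ≤ ∫⁻ x, ENNReal.ofReal ((φ x).toReal) ∂lebUnif := by
        refine imc_lintegral_antitone_le ρ h01 hsup _ ?_ (fun x => ENNReal.toReal_nonneg)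
        intro a b hab
        exact ENNReal.toReal_mono (hfin a) (hφ hab)
    _ = ∫⁻ x, φ x ∂lebUnif := by simp_rw [← hrepr]

lemma imc_updateFinset_update {m : ℕ} (x : Fin m → ℝ) (s : Finset (Fin m))
    (y : ∀ _i : s, ℝ) (j : Fin m) (hj : j ∉ s) (c : ℝ) :
    Function.updateFinset (Function.update x j c) s y
      = Function.update (Function.updateFinset x s y) j c := by
  funext i
  by_cases hi : i ∈ s
  · have hij : i ≠ j := fun h => hj (h ▸ hi)
    simp [Function.updateFinset, hi, Function.update_of_ne hij]
  · by_cases hij : i = j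
    · subst hij
      simp [Function.updateFinset, hi]
    · simp [Function.updateFinset, hi, Function.update_of_ne hij]

lemma imc_pi_lintegral_le_single {m : ℕ} (κ₁ κ₂ : Fin m → Measure ℝ)
    [∀ i, IsProbabilityMeasure (κ₁ i)] [∀ i, IsProbabilityMeasure (κ₂ i)]
    (j : Fin m) (hagree : ∀ i, i ≠ j → κ₁ i = κ₂ i)
    (f : (Fin m → ℝ) → ℝ≥0∞) (hf : Measurable f)
    (C : ℝ≥0∞) (hfC : ∀ x, f x ≤ C)
    (hanti : ∀ (x : Fin m → ℝ) (a b : ℝ), a ≤ b →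
      f (Function.update x j b) ≤ f (Function.update x j a))
    (hcomp : ∀ φ : ℝ → ℝ≥0∞, Antitone φ → (∀ x, φ x ≤ C) →
      ∫⁻ a, φ a ∂(κ₁ j) ≤ ∫⁻ a, φ a ∂(κ₂ j)) :
    ∫⁻ x, f x ∂(Measure.pi κ₁) ≤ ∫⁻ x, f x ∂(Measure.pi κ₂) := by
  classical
  set x₀ : Fin m → ℝ := fun _ => 0 with hx₀
  rw [lintegral_eq_lmarginal_univ (μ := κ₁) x₀, lintegral_eq_lmarginal_univ (μ := κ₂) x₀]
  have hins : (Finset.univ : Finset (Fin m)) = insert j (Finset.univ.erase j) :=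
    (Finset.insert_erase (Finset.mem_univ j)).symm
  rw [hins, lmarginal_insert _ hf (Finset.notMem_erase j _),
    lmarginal_insert _ hf (Finset.notMem_erase j _)]
  have hmar : lmarginal κ₁ (Finset.univ.erase j) f = lmarginal κ₂ (Finset.univ.erase j) f := by
    have hfam : (fun i : (Finset.univ.erase j : Finset (Fin m)) => κ₁ (i : Fin m))
        = fun i : (Finset.univ.erase j : Finset (Fin m)) => κ₂ (i : Fin m) :=
      funext fun i => hagree (i : Fin m) (Finset.ne_of_mem_erase i.prop)
    unfold lmarginal
    rw [hfam]
  rw [hmar]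
  refine hcomp _ ?_ ?_
  · intro a b hab
    refine lintegral_mono fun y => ?_
    rw [imc_updateFinset_update x₀ _ y j (Finset.notMem_erase j _),
      imc_updateFinset_update x₀ _ y j (Finset.notMem_erase j _)]
    exact hanti _ a b hab
  · intro a
    calc (lmarginal κ₂ (Finset.univ.erase j) f) (Function.update x₀ j a)
        ≤ ∫⁻ _y : (∀ _i : (Finset.univ.erase j : Finset (Fin m)), ℝ), C
            ∂(Measure.pi fun i : (Finset.univ.erase j : Finset (Fin m)) => κ₂ i) :=
          lintegral_mono fun y => hfC _
      _ = C := by rw [lintegral_const, measure_univ, mul_one]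

lemma imc_map_tuple_eq_pi {Ω : Type*} [MeasurableSpace Ω] (μ : Measure Ω)
    [IsProbabilityMeasure μ] {m : ℕ} (p : Fin m → Ω → ℝ) (hmeas : ∀ i, Measurable (p i))
    (hindep : iIndepFun p μ) :
    μ.map (fun ω i => p i ω) = Measure.pi (fun i => μ.map (p i)) := by
  haveI : ∀ i, IsProbabilityMeasure (μ.map (p i)) :=
    fun i => Measure.isProbabilityMeasure_map (hmeas i).aemeasurable
  refine (Measure.pi_eq fun s hs => ?_).symm
  have htuple : Measurable (fun ω i => p i ω) := measurable_pi_lambda _ hmeas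
  rw [Measure.map_apply htuple (MeasurableSet.univ_pi hs)]
  have hpre : (fun ω i => p i ω) ⁻¹' Set.pi Set.univ s = ⋂ i ∈ Finset.univ, p i ⁻¹' s i := by
    ext ω
    simp [Set.mem_pi]
  rw [hpre, hindep.measure_inter_preimage_eq_mul Finset.univ (fun i _ => hs i)]
  exact Finset.prod_congr rfl fun i _ => (Measure.map_apply (hmeas i) (hs i)).symm

/-- Inverse moment criterion for the homogeneous class `F₀`: for independent
super-uniform null p-values and `m̂₀(p) = (1 + Σᵢ g(pᵢ))/ν`, one has
`E[1/m̂₀(p_{0,h})] ≤ 1/m₀` for every null index `h`. -/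
theorem imc_for_homogeneous_class
    {Ω : Type*} [MeasurableSpace Ω] (μ : Measure Ω) [IsProbabilityMeasure μ]
    (m : ℕ) (p : Fin m → Ω → ℝ) (hmeas : ∀ i, Measurable (p i))
    (hindep : iIndepFun p μ)
    (hrange : ∀ i, ∀ᵐ ω ∂μ, p i ω ∈ Set.Icc (0:ℝ) 1)
    (H₀ : Finset (Fin m)) (m₀ : ℕ) (hcard : H₀.card = m₀) (hm₀ : 1 ≤ m₀)
    (hsup : ∀ h ∈ H₀, ∀ t ∈ Set.Icc (0:ℝ) 1, μ {ω | p h ω ≤ t} ≤ ENNReal.ofReal t)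
    (g : ℝ → ℝ) (hmono : MonotoneOn g (Set.Icc 0 1))
    (hg01 : ∀ u ∈ Set.Icc (0:ℝ) 1, g u ∈ Set.Icc (0:ℝ) 1)
    (ν : ℝ) (hν : ν = ∫ u in (0:ℝ)..1, g u) (hνpos : 0 < ν) :
    ∀ h ∈ H₀,
      ∫ ω, ν / (1 + (g 0 + ∑ i ∈ Finset.univ.erase h, g (p i ω))) ∂μ ≤ 1 / (m₀ : ℝ) := by
  classical
  intro h hh
  -- clamped version of g
  set G : ℝ → ℝ := fun x => g (max 0 (min x 1)) with hGdef
  have hclamp : ∀ x : ℝ, max 0 (min x 1) ∈ Set.Icc (0:ℝ) 1 := fun x =>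
    ⟨le_max_left _ _, max_le zero_le_one (min_le_right x 1)⟩
  have hGmono : Monotone G := fun a b hab =>
    hmono (hclamp a) (hclamp b) (max_le_max le_rfl (min_le_min_right 1 hab))
  have hG01 : ∀ x, G x ∈ Set.Icc (0:ℝ) 1 := fun x => hg01 _ (hclamp x)
  have hGeq : ∀ x ∈ Set.Icc (0:ℝ) 1, G x = g x := fun x hx => by
    rw [hGdef]; dsimp only; rw [min_eq_left hx.2, max_eq_right hx.1]
  have hGmeas : Measurable G := hGmono.measurable
  have hG0 : G 0 = g 0 := hGeq 0 ⟨le_rfl, zero_le_one⟩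
  -- the value ν as a lintegral over lebUnif
  have hGint : Integrable G lebUnif := by
    refine Integrable.mono' (integrable_const (1:ℝ)) hGmeas.aestronglyMeasurable
      (Filter.Eventually.of_forall fun x => ?_)
    rw [Real.norm_eq_abs, abs_of_nonneg (hG01 x).1]
    exact (hG01 x).2
  have hνl : ∫⁻ x, ENNReal.ofReal (G x) ∂lebUnif = ENNReal.ofReal ν := by
    rw [← ofReal_integral_eq_lintegral_ofReal hGint
      (Filter.Eventually.of_forall fun x => (hG01 x).1)]
    congr 1
    rw [hν, intervalIntegral.integral_of_le zero_le_one, lebUnif,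
      ← integral_Icc_eq_integral_Ioc]
    exact setIntegral_congr_fun measurableSet_Icc (fun x hx => hGeq x hx)
  -- laws
  set ρ : Fin m → Measure ℝ := fun i => μ.map (p i) with hρdef
  haveI hρprob : ∀ i, IsProbabilityMeasure (ρ i) :=
    fun i => Measure.isProbabilityMeasure_map (hmeas i).aemeasurable
  set κ : Finset (Fin m) → Fin m → Measure ℝ :=
    fun s i => if i ∈ s then lebUnif else ρ i with hκdef
  haveI hκprob : ∀ (s : Finset (Fin m)) (i : Fin m), IsProbabilityMeasure (κ s i) := by
    intro s i
    rw [hκdef]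
    dsimp only
    split_ifs <;> infer_instance
  -- denominators
  set D : (Fin m → ℝ) → ℝ :=
    fun x => 1 + (G 0 + ∑ i ∈ Finset.univ.erase h, G (x i)) with hDdef
  set Dn : (Fin m → ℝ) → ℝ :=
    fun x => 1 + (G 0 + ∑ i ∈ H₀.erase h, G (x i)) with hDndef
  set Sf : (Fin m → ℝ) → ℝ := fun x => ∑ i ∈ H₀, G (x i) with hSdef
  have hD1 : ∀ x, 1 ≤ D x := fun x => by
    have h1 : 0 ≤ G 0 + ∑ i ∈ Finset.univ.erase h, G (x i) :=
      add_nonneg (hG01 0).1 (Finset.sum_nonneg fun i _ => (hG01 _).1)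
    simp only [hDdef]; linarith
  have hDn1 : ∀ x, 1 ≤ Dn x := fun x => by
    have h1 : 0 ≤ G 0 + ∑ i ∈ H₀.erase h, G (x i) :=
      add_nonneg (hG01 0).1 (Finset.sum_nonneg fun i _ => (hG01 _).1)
    simp only [hDndef]; linarith
  have hDmeas : Measurable D :=
    measurable_const.add (measurable_const.add
      (Finset.measurable_sum _ fun i _ => hGmeas.comp (measurable_pi_apply i)))
  have hDnmeas : Measurable Dn :=
    measurable_const.add (measurable_const.add
      (Finset.measurable_sum _ fun i _ => hGmeas.comp (measurable_pi_apply i)))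
  have hSmeas : Measurable Sf :=
    Finset.measurable_sum _ fun i _ => hGmeas.comp (measurable_pi_apply i)
  have hSnonneg : ∀ x, 0 ≤ Sf x := fun x => Finset.sum_nonneg fun i _ => (hG01 _).1
  -- the functions
  set F : (Fin m → ℝ) → ℝ≥0∞ := fun x => ENNReal.ofReal (ν / D x) with hFdef
  set Fn : (Fin m → ℝ) → ℝ≥0∞ := fun x => ENNReal.ofReal (ν / Dn x) with hFndef
  set Φ' : (Fin m → ℝ) → ℝ≥0∞ := fun x => ENNReal.ofReal (G (x h) / Dn x) with hΦ'def
  set Φk : Fin m → (Fin m → ℝ) → ℝ≥0∞ :=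
    fun k x => ENNReal.ofReal (G (x k) / Sf x) with hΦkdef
  have hFmeas : Measurable F := ENNReal.measurable_ofReal.comp (measurable_const.div hDmeas)
  have hFnmeas : Measurable Fn := ENNReal.measurable_ofReal.comp (measurable_const.div hDnmeas)
  have hΦ'meas : Measurable Φ' := ENNReal.measurable_ofReal.comp
    ((hGmeas.comp (measurable_pi_apply h)).div hDnmeas)
  have hΦkmeas : ∀ k, Measurable (Φk k) := fun k => ENNReal.measurable_ofReal.comp
    ((hGmeas.comp (measurable_pi_apply k)).div hSmeas)
  have hFC : ∀ x, F x ≤ ENNReal.ofReal ν := fun x =>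
    ENNReal.ofReal_le_ofReal (div_le_self hνpos.le (hD1 x))
  have htuple : Measurable (fun ω i => p i ω) := measurable_pi_lambda _ hmeas
  -- Step 1 : rewrite integrand using G, a.e.
  have haeG : ∀ᵐ ω ∂μ, ∀ i, p i ω ∈ Set.Icc (0:ℝ) 1 := (ae_all_iff).mpr hrange
  have hstep1 : ∫ ω, ν / (1 + (g 0 + ∑ i ∈ Finset.univ.erase h, g (p i ω))) ∂μ
      = ∫ ω, ν / D (fun i => p i ω) ∂μ := by
    refine integral_congr_ae ?_
    filter_upwards [haeG] with ω hω
    have hsum : ∑ i ∈ Finset.univ.erase h, g (p i ω)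
        = ∑ i ∈ Finset.univ.erase h, G (p i ω) :=
      Finset.sum_congr rfl fun i _ => (hGeq _ (hω i)).symm
    rw [hsum, ← hG0]
  -- Step 2 : to lintegral
  have hq_nonneg : ∀ ω, 0 ≤ ν / D (fun i => p i ω) := fun ω =>
    div_nonneg hνpos.le (le_trans zero_le_one (hD1 _))
  have hq_meas : Measurable fun ω => ν / D (fun i => p i ω) :=
    measurable_const.div (hDmeas.comp htuple)
  have hstep2 : ∫ ω, ν / D (fun i => p i ω) ∂μ
      = (∫⁻ ω, F (fun i => p i ω) ∂μ).toReal := by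
    rw [integral_eq_lintegral_of_nonneg_ae (Filter.Eventually.of_forall hq_nonneg)
      hq_meas.aestronglyMeasurable]
  -- Step 3 : to the product law
  have hstep3 : ∫⁻ ω, F (fun i => p i ω) ∂μ = ∫⁻ x, F x ∂(Measure.pi ρ) := by
    rw [← imc_map_tuple_eq_pi μ p hmeas hindep, lintegral_map hFmeas htuple]
  -- Step 4 : replace null coordinates by uniform
  have hκ0 : κ ∅ = ρ := funext fun i => by simp [hκdef]
  have hmono_fam : ∀ s : Finset (Fin m), s ⊆ H₀ →
      ∫⁻ x, F x ∂(Measure.pi ρ) ≤ ∫⁻ x, F x ∂(Measure.pi (κ s)) := by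
    intro s
    induction s using Finset.induction_on with
    | empty => intro _; rw [hκ0]
    | @insert j s hj ih =>
      intro hsub
      have hjH : j ∈ H₀ := hsub (Finset.mem_insert_self j s)
      have hsS : s ⊆ H₀ := fun i hi => hsub (Finset.mem_insert_of_mem hi)
      refine (ih hsS).trans ?_
      refine imc_pi_lintegral_le_single (κ s) (κ (insert j s)) j ?_ F hFmeas
        (ENNReal.ofReal ν) hFC ?_ ?_
      · intro i hij
        simp [hκdef, Finset.mem_insert, hij]
      · intro x a b hab
        apply ENNReal.ofReal_le_ofReal
        have hsum : ∑ i ∈ Finset.univ.erase h, G (Function.update x j a i)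
            ≤ ∑ i ∈ Finset.univ.erase h, G (Function.update x j b i) := by
          refine Finset.sum_le_sum fun i _ => ?_
          by_cases hij : i = j
          · subst hij
            rw [Function.update_self, Function.update_self]
            exact hGmono hab
          · rw [Function.update_of_ne hij, Function.update_of_ne hij]
        have hle : D (Function.update x j a) ≤ D (Function.update x j b) := by
          simp only [hDdef]; linarith
        have hpos : (0:ℝ) < D (Function.update x j a) :=
          lt_of_lt_of_le zero_lt_one (hD1 _)
        exact div_le_div_of_nonneg_left hνpos.le hpos hle
      · intro φ hφanti hφC
        have e1 : κ s j = ρ j := by simp [hκdef, hj]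
        have e2 : κ (insert j s) j = lebUnif := by simp [hκdef]
        rw [e1, e2]
        refine imc_lintegral_antitone_le' (ρ j) ?_ ?_ φ hφanti _ ENNReal.ofReal_ne_top hφC
        · rw [hρdef]
          dsimp only
          rw [Measure.map_apply (hmeas j) measurableSet_Icc.compl]
          exact ae_iff.mp (hrange j)
        · intro t ht
          rw [hρdef]
          dsimp only
          rw [Measure.map_apply (hmeas j) measurableSet_Iic]
          exact hsup j hjH t ht
  -- Step 5 : drop the non-null coordinates
  have hdrop : ∫⁻ x, F x ∂(Measure.pi (κ H₀)) ≤ ∫⁻ x, Fn x ∂(Measure.pi (κ H₀)) := by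
    refine lintegral_mono fun x => ?_
    apply ENNReal.ofReal_le_ofReal
    have hsub : H₀.erase h ⊆ Finset.univ.erase h :=
      Finset.erase_subset_erase h (Finset.subset_univ H₀)
    have hsle : ∑ i ∈ H₀.erase h, G (x i) ≤ ∑ i ∈ Finset.univ.erase h, G (x i) :=
      Finset.sum_le_sum_of_subset_of_nonneg hsub (fun i _ _ => (hG01 (x i)).1)
    have hle : Dn x ≤ D x := by simp only [hDdef, hDndef]; linarith
    have hpos : (0:ℝ) < Dn x := lt_of_lt_of_le zero_lt_one (hDn1 x)
    exact div_le_div_of_nonneg_left hνpos.le hpos hle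
  -- Step 6 : peel off coordinate h, replacing ν by an integral of G
  set t : Finset (Fin m) := Finset.univ.erase h with htdef
  have hκH_h : κ H₀ h = lebUnif := by simp [hκdef, hh]
  set x₀ : Fin m → ℝ := fun _ => 0 with hx₀def
  have hinsh : (Finset.univ : Finset (Fin m)) = insert h t :=
    (Finset.insert_erase (Finset.mem_univ h)).symm
  have hDn_indep : ∀ (a : ℝ) (y : ∀ _i : (t : Finset (Fin m)), ℝ),
      Dn (Function.updateFinset (Function.update x₀ h a) t y)
        = Dn (Function.updateFinset x₀ t y) := by
    intro a y
    simp only [hDndef]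
    congr 2
    refine Finset.sum_congr rfl fun i hi => ?_
    have hit : i ∈ t := by
      rw [htdef]
      exact Finset.mem_erase.mpr ⟨(Finset.mem_erase.mp hi).1, Finset.mem_univ i⟩
    simp [Function.updateFinset, hit]
  have hval_h : ∀ (a : ℝ) (y : ∀ _i : (t : Finset (Fin m)), ℝ),
      (Function.updateFinset (Function.update x₀ h a) t y) h = a := by
    intro a y
    have hht : h ∉ t := by rw [htdef]; exact Finset.notMem_erase h _
    simp [Function.updateFinset, hht]
  set K : (∀ _i : (t : Finset (Fin m)), ℝ) → ℝ≥0∞ :=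
    fun y => ENNReal.ofReal (1 / Dn (Function.updateFinset x₀ t y)) with hKdef
  set L : ℝ≥0∞ := ∫⁻ y, K y ∂(Measure.pi fun i : (t : Finset (Fin m)) => κ H₀ i) with hLdef
  have hLne : L ≠ ⊤ := by
    have hle1 : L ≤ 1 := by
      rw [hLdef]
      calc ∫⁻ y, K y ∂(Measure.pi fun i : (t : Finset (Fin m)) => κ H₀ i)
          ≤ ∫⁻ _y, 1 ∂(Measure.pi fun i : (t : Finset (Fin m)) => κ H₀ i) := by
            refine lintegral_mono fun y => ?_
            simp only [hKdef]
            refine ENNReal.ofReal_le_one.mpr ?_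
            rw [div_le_one (lt_of_lt_of_le zero_lt_one (hDn1 _))]
            exact hDn1 _
        _ = 1 := by rw [lintegral_one, measure_univ]
    exact ne_top_of_le_ne_top ENNReal.one_ne_top hle1
  have hL1 : ∀ a : ℝ, (lmarginal (κ H₀) t Fn) (Function.update x₀ h a)
      = ENNReal.ofReal ν * L := by
    intro a
    rw [hLdef]
    unfold lmarginal
    rw [← lintegral_const_mul' _ _ ENNReal.ofReal_ne_top]
    refine lintegral_congr fun y => ?_
    simp only [hFndef, hKdef]
    rw [hDn_indep a y, ← ENNReal.ofReal_mul hνpos.le, mul_one_div]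
  have hL2 : ∀ a : ℝ, (lmarginal (κ H₀) t Φ') (Function.update x₀ h a)
      = ENNReal.ofReal (G a) * L := by
    intro a
    rw [hLdef]
    unfold lmarginal
    rw [← lintegral_const_mul' _ _ ENNReal.ofReal_ne_top]
    refine lintegral_congr fun y => ?_
    simp only [hΦ'def, hKdef]
    rw [hDn_indep a y, hval_h a y, ← ENNReal.ofReal_mul (hG01 a).1, mul_one_div]
  have hpeel : ∫⁻ x, Fn x ∂(Measure.pi (κ H₀)) = ∫⁻ x, Φ' x ∂(Measure.pi (κ H₀)) := by
    rw [lintegral_eq_lmarginal_univ (μ := κ H₀) x₀,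
      lintegral_eq_lmarginal_univ (μ := κ H₀) x₀, hinsh,
      lmarginal_insert _ hFnmeas (by rw [htdef]; exact Finset.notMem_erase h _),
      lmarginal_insert _ hΦ'meas (by rw [htdef]; exact Finset.notMem_erase h _), hκH_h]
    calc ∫⁻ a, (lmarginal (κ H₀) t Fn) (Function.update x₀ h a) ∂lebUnif
        = ∫⁻ _a, ENNReal.ofReal ν * L ∂lebUnif := lintegral_congr fun a => hL1 a
      _ = ENNReal.ofReal ν * L := by rw [lintegral_const, measure_univ, mul_one]
      _ = (∫⁻ a, ENNReal.ofReal (G a) ∂lebUnif) * L := by rw [hνl]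
      _ = ∫⁻ a, ENNReal.ofReal (G a) * L ∂lebUnif := by
          rw [← lintegral_mul_const' L _ hLne]
      _ = ∫⁻ a, (lmarginal (κ H₀) t Φ') (Function.update x₀ h a) ∂lebUnif :=
          lintegral_congr fun a => (hL2 a).symm
  -- Step 7 : pointwise comparison with the symmetric function
  have hΦ'le : ∀ x, Φ' x ≤ Φk h x := by
    intro x
    simp only [hΦ'def, hΦkdef]
    apply ENNReal.ofReal_le_ofReal
    have hSx : Sf x = G (x h) + ∑ i ∈ H₀.erase h, G (x i) := by
      rw [hSdef]
      exact (Finset.add_sum_erase H₀ (fun i => G (x i)) hh).symm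
    rcases eq_or_lt_of_le (hG01 (x h)).1 with h0 | h0
    · rw [← h0, zero_div, zero_div]
    · have hrest : 0 ≤ ∑ i ∈ H₀.erase h, G (x i) :=
        Finset.sum_nonneg fun i _ => (hG01 _).1
      have hSpos : 0 < Sf x := by rw [hSx]; linarith
      have hSD : Sf x ≤ Dn x := by
        rw [hSx]
        simp only [hDndef]
        have h2 := (hG01 (x h)).2
        have h3 := (hG01 (0:ℝ)).1
        linarith
      exact div_le_div_of_nonneg_left (hG01 (x h)).1 hSpos hSD
  -- Step 8 : exchangeability
  have hswap : ∀ k ∈ H₀, ∫⁻ x, Φk k x ∂(Measure.pi (κ H₀))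
      = ∫⁻ x, Φk h x ∂(Measure.pi (κ H₀)) := by
    intro k hk
    set σ := Equiv.swap h k with hσdef
    have hσmem : ∀ i : Fin m, σ i ∈ H₀ ↔ i ∈ H₀ := by
      intro i
      rcases eq_or_ne i h with rfl | hih
      · simp [hσdef, Equiv.swap_apply_left, hh, hk]
      rcases eq_or_ne i k with rfl | hik
      · simp [hσdef, Equiv.swap_apply_right, hh, hk]
      · rw [hσdef, Equiv.swap_apply_of_ne_of_ne hih hik]
    have hfam : (fun i => κ H₀ (σ i)) = κ H₀ := by
      funext i
      by_cases hi : i ∈ H₀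
      · simp [hκdef, hi, (hσmem i).mpr hi]
      · have hih : i ≠ h := fun e => hi (e ▸ hh)
        have hik : i ≠ k := fun e => hi (e ▸ hk)
        rw [hσdef, Equiv.swap_apply_of_ne_of_ne hih hik]
    have hMP : MeasurePreserving (MeasurableEquiv.piCongrLeft (fun _ : Fin m => ℝ) σ)
        (Measure.pi (κ H₀)) (Measure.pi (κ H₀)) := by
      have hmp := measurePreserving_piCongrLeft (κ H₀) σ
      rwa [hfam] at hmp
    have hcomp := hMP.lintegral_comp (hΦkmeas h)
    rw [← hcomp]
    refine lintegral_congr fun x => ?_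
    have hex : (MeasurableEquiv.piCongrLeft (fun _ : Fin m => ℝ) σ) x
        = fun i => x (σ.symm i) := by
      funext i
      rw [MeasurableEquiv.coe_piCongrLeft]
      conv_lhs => rw [← Equiv.apply_symm_apply σ i]
      rw [Equiv.piCongrLeft_apply_apply]
    rw [hex]
    simp only [hΦkdef]
    have hsymm : σ.symm = σ := Equiv.symm_swap h k
    have hvh : x (σ.symm h) = x k := by rw [hsymm, hσdef, Equiv.swap_apply_left]
    have hSeq : Sf (fun i => x (σ.symm i)) = Sf x := by
      simp only [hSdef]
      refine Finset.sum_equiv σ.symm (fun i => ?_) (fun i _ => rfl)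
      rw [hsymm]
      exact (hσmem i).symm
    rw [hvh, hSeq]
  -- Step 9 : summing up
  have hone : ∫⁻ x, Φk h x ∂(Measure.pi (κ H₀)) ≤ (m₀ : ℝ≥0∞)⁻¹ := by
    have hm₀ne : (m₀ : ℝ≥0∞) ≠ 0 := by
      exact_mod_cast Nat.one_le_iff_ne_zero.mp hm₀
    rw [ENNReal.le_inv_iff_mul_le]
    have h1 : ∑ k ∈ H₀, ∫⁻ x, Φk k x ∂(Measure.pi (κ H₀))
        = (∫⁻ x, Φk h x ∂(Measure.pi (κ H₀))) * (m₀ : ℝ≥0∞) := by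
      rw [Finset.sum_congr rfl (fun k hk => hswap k hk), Finset.sum_const, hcard,
        nsmul_eq_mul, mul_comm]
    rw [← h1, ← lintegral_finset_sum _ fun k _ => hΦkmeas k]
    calc ∫⁻ x, ∑ k ∈ H₀, Φk k x ∂(Measure.pi (κ H₀))
        ≤ ∫⁻ _x, 1 ∂(Measure.pi (κ H₀)) := by
          refine lintegral_mono fun x => ?_
          have hsum : ∑ k ∈ H₀, Φk k x
              = ENNReal.ofReal (∑ k ∈ H₀, G (x k) / Sf x) := by
            simp only [hΦkdef]
            rw [ENNReal.ofReal_sum_of_nonneg fun k _ => div_nonneg (hG01 _).1 (hSnonneg x)]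
          have hSS : ∑ k ∈ H₀, G (x k) = Sf x := by rw [hSdef]
          rw [hsum, ← Finset.sum_div, hSS]
          rcases eq_or_lt_of_le (hSnonneg x) with h0 | h0
          · rw [← h0, div_zero]
            simp
          · rw [div_self h0.ne']
            simp
      _ = 1 := by rw [lintegral_one, measure_univ]
  -- Final assembly
  have hchain : ∫⁻ ω, F (fun i => p i ω) ∂μ ≤ (m₀ : ℝ≥0∞)⁻¹ := by
    rw [hstep3]
    refine le_trans (hmono_fam H₀ (subset_refl H₀)) ?_
    refine le_trans hdrop ?_
    rw [hpeel]
    exact le_trans (lintegral_mono hΦ'le) hone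
  rw [hstep1, hstep2]
  have hm₀ne : (m₀ : ℝ≥0∞) ≠ 0 := by
    exact_mod_cast Nat.one_le_iff_ne_zero.mp hm₀
  have hnetop : ((m₀ : ℝ≥0∞))⁻¹ ≠ ⊤ := by
    simp [ENNReal.inv_ne_top, hm₀ne]
  calc (∫⁻ ω, F (fun i => p i ω) ∂μ).toReal ≤ ((m₀ : ℝ≥0∞)⁻¹).toReal :=
      ENNReal.toReal_mono hnetop hchain
    _ = 1 / (m₀ : ℝ) := by
      rw [ENNReal.toReal_inv, ENNReal.toReal_natCast, one_div]
end

section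
/- Suppose p₁, …, pₘ are mutually independent in [0,1] with pₕ super-uniform for each h in H₀, |H₀| = m₀ ≥ 1. Let g₁,…,gₘ : [0,1] → [0,1] be non-decreasing with νᵢ = E[gᵢ(U)] > 0 (U ~ Uniform[0,1]), and define m̂₀(p) = 1/min(ν₁,…,νₘ) + Σᵢ gᵢ(pᵢ)/νᵢ. Then for every h ∈ H₀, E[1/m̂₀(p_{0,h})] ≤ 1/m₀, where p_{0,h} denotes p with pₕ replaced by 0. -/
open MeasureTheory Set ProbabilityTheory

section AuxIMC

noncomputable def clampI (u : ℝ) : ℝ := max 0 (min u 1)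

lemma clampI_mem (u : ℝ) : clampI u ∈ Icc (0:ℝ) 1 :=
  ⟨le_max_left _ _, max_le (by norm_num) (min_le_right _ _)⟩

lemma clampI_monotone : Monotone clampI := fun _ _ h =>
  max_le_max le_rfl (min_le_min h le_rfl)

lemma clampI_eq {u : ℝ} (hu : u ∈ Icc (0:ℝ) 1) : clampI u = u := by
  simp only [clampI, min_eq_left hu.2, max_eq_right hu.1]

lemma integrable_of_bd {Ω : Type*} [MeasurableSpace Ω] {μ : Measure Ω} [IsFiniteMeasure μ]
    {f : Ω → ℝ} (hf : Measurable f) (C : ℝ) (h : ∀ᵐ ω ∂μ, |f ω| ≤ C) : Integrable f μ :=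
  Integrable.mono' (integrable_const C) hf.aestronglyMeasurable
    (h.mono fun ω hω => by simpa [Real.norm_eq_abs] using hω)

lemma exp_chord {y c s : ℝ} (hc : 0 < c) (hy0 : 0 ≤ y) (hyc : y ≤ c) :
    Real.exp (-(y * s)) ≤ 1 - y / c * (1 - Real.exp (-(c * s))) := by
  have ht0 : 0 ≤ y / c := div_nonneg hy0 hc.le
  have ht1 : y / c ≤ 1 := (div_le_one hc).2 hyc
  have h := convexOn_exp.2 (mem_univ (0:ℝ)) (mem_univ (-(c*s)))
    (by linarith : (0:ℝ) ≤ 1 - y / c) ht0 (by ring)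
  have harg : (1 - y / c) • (0:ℝ) + (y / c) • (-(c*s)) = -(y * s) := by
    rw [smul_eq_mul, smul_eq_mul, mul_zero, zero_add, div_mul_eq_mul_div, div_eq_iff hc.ne']; ring
  rw [harg] at h
  calc Real.exp (-(y*s)) ≤ (1 - y/c) • Real.exp 0 + (y/c) • Real.exp (-(c*s)) := h
    _ = 1 - y / c * (1 - Real.exp (-(c*s))) := by
        simp [smul_eq_mul, Real.exp_zero]; ring

lemma integral_exp_neg_mul_Ioi {b : ℝ} (hb : 0 < b) :
    ∫ s in Ioi (0:ℝ), Real.exp (-(b * s)) = 1 / b := by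
  have h := integral_comp_mul_left_Ioi (fun x => Real.exp (-x)) 0 hb
  simp only [mul_zero] at h
  rw [show (fun s : ℝ => Real.exp (-(b * s)))
      = (fun s : ℝ => (fun x => Real.exp (-x)) (b * s)) from rfl]
  rw [h, integral_exp_neg_Ioi, neg_zero, Real.exp_zero, smul_eq_mul, mul_one, one_div]

lemma ofReal_inv_eq_lintegral_exp {D : ℝ} (hD : 0 < D) :
    ENNReal.ofReal D⁻¹ = ∫⁻ s in Ioi (0:ℝ), ENNReal.ofReal (Real.exp (-(D * s))) := by
  have hi : IntegrableOn (fun x : ℝ => Real.exp (-(D * x))) (Ioi 0) := by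
    simpa [neg_mul] using exp_neg_integrableOn_Ioi 0 hD
  rw [← ofReal_integral_eq_lintegral_ofReal hi
      (Filter.Eventually.of_forall fun x => Real.exp_nonneg _)]
  rw [integral_exp_neg_mul_Ioi hD, one_div]

lemma lintegral_prod_indep {Ω ι : Type*} [MeasurableSpace Ω] {μ : Measure Ω}
    [IsProbabilityMeasure μ] {F : ι → Ω → ENNReal} (hFmeas : ∀ i, Measurable (F i))
    (hFindep : iIndepFun F μ) (T : Finset ι) :
    ∫⁻ ω, ∏ i ∈ T, F i ω ∂μ = ∏ i ∈ T, ∫⁻ ω, F i ω ∂μ := by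
  classical
  induction T using Finset.induction with
  | empty => simp
  | @insert a T ha ih =>
    simp only [Finset.prod_insert ha]
    have hindep2 : IndepFun (∏ j ∈ T, F j) (F a) μ :=
      hFindep.indepFun_finsetProd_of_notMem hFmeas ha
    have hmeasT : Measurable (∏ j ∈ T, F j) := by
      rw [show (∏ j ∈ T, F j) = (fun ω => ∏ j ∈ T, F j ω) from
        funext fun ω => Finset.prod_apply ω T F]
      exact Finset.measurable_prod T fun i _ => hFmeas i
    have hmul := lintegral_mul_eq_lintegral_mul_lintegral_of_indepFun hmeasT (hFmeas a) hindep2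
    have heq : ∀ ω, F a ω * ∏ i ∈ T, F i ω = ((∏ j ∈ T, F j) * F a) ω := by
      intro ω; simp [Finset.prod_apply, mul_comm]
    calc ∫⁻ ω, F a ω * ∏ i ∈ T, F i ω ∂μ = ∫⁻ ω, ((∏ j ∈ T, F j) * F a) ω ∂μ :=
          lintegral_congr heq
      _ = (∫⁻ ω, (∏ j ∈ T, F j) ω ∂μ) * ∫⁻ ω, F a ω ∂μ := hmul
      _ = (∫⁻ ω, ∏ j ∈ T, F j ω ∂μ) * ∫⁻ ω, F a ω ∂μ := by
          congr 1; exact lintegral_congr fun ω => Finset.prod_apply ω T F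
      _ = (∏ j ∈ T, ∫⁻ ω, F j ω ∂μ) * ∫⁻ ω, F a ω ∂μ := by rw [ih]
      _ = (∫⁻ ω, F a ω ∂μ) * ∏ j ∈ T, ∫⁻ ω, F j ω ∂μ := mul_comm _ _

lemma mean_ge_int {Ω : Type*} [MeasurableSpace Ω] (μ : Measure Ω) [IsProbabilityMeasure μ]
    (X : Ω → ℝ) (hX : Measurable X)
    (hsup : ∀ t ∈ Icc (0:ℝ) 1, μ {ω | X ω ≤ t} ≤ ENNReal.ofReal t)
    (G : ℝ → ℝ) (hG : Monotone G) (hG01 : ∀ u, G u ∈ Icc (0:ℝ) 1) :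
    ∫ u in Ioc (0:ℝ) 1, G u ≤ ∫ ω, G (X ω) ∂μ := by
  have hGm : Measurable G := hG.measurable
  have hGXm : Measurable fun ω => G (X ω) := hGm.comp hX
  have hint1 : IntegrableOn G (Ioc (0:ℝ) 1) := by
    refine Integrable.mono' (integrable_const 1) hGm.aestronglyMeasurable.restrict ?_
    exact Filter.Eventually.of_forall fun u => by
      rw [Real.norm_eq_abs, abs_of_nonneg (hG01 u).1]; exact (hG01 u).2
  have hint2 : Integrable (fun ω => G (X ω)) μ :=
    integrable_of_bd hGXm 1 (Filter.Eventually.of_forall fun ω => by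
      rw [abs_of_nonneg (hG01 _).1]; exact (hG01 _).2)
  rw [← ENNReal.ofReal_le_ofReal_iff (integral_nonneg fun ω => (hG01 _).1),
    ofReal_integral_eq_lintegral_ofReal hint1 (Filter.Eventually.of_forall fun u => (hG01 u).1),
    ofReal_integral_eq_lintegral_ofReal hint2 (Filter.Eventually.of_forall fun ω => (hG01 _).1)]
  rw [lintegral_eq_lintegral_meas_lt _ (Filter.Eventually.of_forall fun u => (hG01 u).1)
      hGm.aemeasurable,
    lintegral_eq_lintegral_meas_lt μ (Filter.Eventually.of_forall fun ω => (hG01 _).1)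
      hGXm.aemeasurable]
  refine lintegral_mono fun t => ?_
  rw [Measure.restrict_apply (measurableSet_lt measurable_const hGm)]
  set S : Set ℝ := {u | t < G u} ∩ Ioc 0 1 with hSdef
  rcases S.eq_empty_or_nonempty with hne | hne
  · rw [hne, measure_empty]; exact zero_le
  have hbdd : BddBelow S := ⟨0, fun x hx => hx.2.1.le⟩
  set a := sInf S with ha
  have ha0 : 0 ≤ a := le_csInf hne fun x hx => hx.2.1.le
  have hSsub : S ⊆ Icc a 1 := fun x hx => ⟨csInf_le hbdd hx, hx.2.2⟩
  have hvol : volume S ≤ ENNReal.ofReal (1 - a) := by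
    calc volume S ≤ volume (Icc a 1) := measure_mono hSsub
      _ = ENNReal.ofReal (1 - a) := Real.volume_Icc
  refine le_trans hvol ?_
  refine ENNReal.le_of_forall_pos_le_add fun ε hε _ => ?_
  obtain ⟨u₀, hu₀S, hu₀lt⟩ := Real.lt_sInf_add_pos hne (by positivity : (0:ℝ) < (ε:ℝ))
  have hu₀1 : u₀ ≤ 1 := hu₀S.2.2
  have hu₀0 : 0 ≤ u₀ := hu₀S.2.1.le
  have hsub : {ω | u₀ ≤ X ω} ⊆ {ω | t < G (X ω)} := fun ω hω =>
    lt_of_lt_of_le hu₀S.1 (hG hω)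
  have hmeas' : MeasurableSet {ω | X ω < u₀} := measurableSet_lt hX measurable_const
  have hcompl : μ {ω | u₀ ≤ X ω} = 1 - μ {ω | X ω < u₀} := by
    have hc : {ω | u₀ ≤ X ω} = {ω | X ω < u₀}ᶜ := by ext ω; simp [not_lt]
    rw [hc, prob_compl_eq_one_sub hmeas']
  have hsub2 : {ω | X ω < u₀} ⊆ {ω | X ω ≤ u₀} := fun ω (hω : X ω < u₀) => le_of_lt hω
  have hle : μ {ω | X ω < u₀} ≤ ENNReal.ofReal u₀ :=
    le_trans (measure_mono hsub2) (hsup u₀ ⟨hu₀0, hu₀1⟩)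
  have hkey : ENNReal.ofReal (1 - u₀) ≤ μ {ω | u₀ ≤ X ω} := by
    rw [hcompl]
    calc ENNReal.ofReal (1 - u₀) = ENNReal.ofReal 1 - ENNReal.ofReal u₀ :=
          ENNReal.ofReal_sub 1 hu₀0
      _ = 1 - ENNReal.ofReal u₀ := by rw [ENNReal.ofReal_one]
      _ ≤ 1 - μ {ω | X ω < u₀} := tsub_le_tsub_left hle 1
  calc ENNReal.ofReal (1 - a) ≤ ENNReal.ofReal ((1 - u₀) + ε) :=
        ENNReal.ofReal_le_ofReal (by linarith)
    _ ≤ ENNReal.ofReal (1 - u₀) + ENNReal.ofReal ε := ENNReal.ofReal_add_le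
    _ ≤ μ {ω | u₀ ≤ X ω} + ε := by
        rw [ENNReal.ofReal_coe_nnreal]; exact add_le_add_left hkey _
    _ ≤ μ {ω | t < G (X ω)} + ε := add_le_add_left (measure_mono hsub) _

lemma null_factor_bound {Ω : Type*} [MeasurableSpace Ω] (μ : Measure Ω) [IsProbabilityMeasure μ]
    {Y : Ω → ℝ} (hY : Measurable Y) {c : ℝ} (hc : 0 < c)
    (hY0 : ∀ ω, 0 ≤ Y ω) (hYc : ∀ ω, Y ω ≤ c) (hEY : 1 ≤ ∫ ω, Y ω ∂μ)
    {s : ℝ} (hs : 0 ≤ s) :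
    ∫ ω, Real.exp (-(Y ω * s)) ∂μ ≤ 1 - 1/c * (1 - Real.exp (-(c * s))) := by
  have hYint : Integrable Y μ := integrable_of_bd hY c
    (Filter.Eventually.of_forall fun ω => abs_le.2 ⟨by linarith [hY0 ω], hYc ω⟩)
  have hexp_int : Integrable (fun ω => Real.exp (-(Y ω * s))) μ := by
    refine integrable_of_bd (Real.measurable_exp.comp (hY.mul_const s).neg) 1
      (Filter.Eventually.of_forall fun ω => ?_)
    rw [abs_of_nonneg (Real.exp_nonneg _)]
    calc Real.exp (-(Y ω * s)) ≤ Real.exp 0 :=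
          Real.exp_le_exp.2 (by nlinarith [hY0 ω])
      _ = 1 := Real.exp_zero
  have hβ : 0 ≤ 1 - Real.exp (-(c*s)) := by
    have h1 : Real.exp (-(c*s)) ≤ 1 := by
      rw [← Real.exp_zero]; exact Real.exp_le_exp.2 (by nlinarith)
    linarith
  have hRHS_int : Integrable (fun ω => 1 - Y ω / c * (1 - Real.exp (-(c*s)))) μ :=
    (integrable_const 1).sub ((hYint.div_const c).mul_const _)
  have hmono := integral_mono hexp_int hRHS_int (fun ω => exp_chord hc (hY0 ω) (hYc ω))
  refine le_trans hmono ?_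
  rw [integral_sub (integrable_const 1) ((hYint.div_const c).mul_const _), integral_const]
  simp only [probReal_univ, measure_univ, ENNReal.toReal_one, smul_eq_mul, one_mul]
  rw [integral_mul_const, integral_div]
  have hstep : (1:ℝ)/c * (1 - Real.exp (-(c*s))) ≤ (∫ ω, Y ω ∂μ)/c * (1 - Real.exp (-(c*s))) := by
    refine mul_le_mul_of_nonneg_right ?_ hβ
    exact (div_le_div_iff_of_pos_right hc).2 hEY
  linarith

lemma sum_bound (k : ℕ) (q : ℝ) (hq0 : 0 < q) (hq1 : q ≤ 1) :
    ∑ j ∈ Finset.range (k+1),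
        (k.choose j : ℝ) * q^j * (1-q)^(k-j) * (1/(((j:ℝ)+1)*(1/q)))
      ≤ 1 / ((k:ℝ)+1) := by
  have hq1' : (0:ℝ) ≤ 1 - q := by linarith
  have hterm : ∀ j ∈ Finset.range (k+1),
      (k.choose j : ℝ) * q^j * (1-q)^(k-j) * (1/(((j:ℝ)+1)*(1/q)))
        = (1/((k:ℝ)+1)) * (q^(j+1) * (1-q)^(k+1-(j+1)) * (((k+1).choose (j+1)) : ℝ)) := by
    intro j hj
    have hcast : ((k:ℝ)+1) * (k.choose j : ℝ) = (((k+1).choose (j+1)) : ℝ) * ((j:ℝ)+1) := by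
      exact_mod_cast congrArg (Nat.cast : ℕ → ℝ) (Nat.add_one_mul_choose_eq k j)
    have hsub : k + 1 - (j+1) = k - j := Nat.succ_sub_succ k j
    have hj1 : ((j:ℝ)+1) ≠ 0 := by positivity
    have hk1 : ((k:ℝ)+1) ≠ 0 := by positivity
    rw [hsub, pow_succ]
    field_simp
    linear_combination ((1 - q) ^ (k - j)) * hcast
  rw [Finset.sum_congr rfl hterm, ← Finset.mul_sum]
  have hb : ∑ j ∈ Finset.range (k+1),
      q^(j+1) * (1-q)^(k+1-(j+1)) * (((k+1).choose (j+1)) : ℝ) ≤ 1 := by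
    have hpow : (1:ℝ) = ∑ i ∈ Finset.range (k+2), q^i * (1-q)^(k+1-i) * (((k+1).choose i) : ℝ) := by
      have h := add_pow q (1-q) (k+1)
      rw [show q + (1-q) = (1:ℝ) by ring, one_pow] at h
      exact h
    rw [Finset.sum_range_succ'] at hpow
    have hb0 : (0:ℝ) ≤ q^0 * (1-q)^(k+1-0) * (((k+1).choose 0) : ℝ) := by positivity
    linarith [hpow, hb0]
  calc (1/((k:ℝ)+1)) * ∑ j ∈ Finset.range (k+1),
          q^(j+1) * (1-q)^(k+1-(j+1)) * (((k+1).choose (j+1)) : ℝ)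
      ≤ (1/((k:ℝ)+1)) * 1 := mul_le_mul_of_nonneg_left hb (by positivity)
    _ = 1/((k:ℝ)+1) := mul_one _

end AuxIMC

/-- Inverse moment criterion for the heterogeneous class `F`: with individual
transformations `gᵢ`, rescaling constants `νᵢ` and
`m̂₀(p) = 1/min(ν₁,…,νₘ) + Σᵢ gᵢ(pᵢ)/νᵢ`, one has `E[1/m̂₀(p_{0,h})] ≤ 1/m₀` for every
null index `h`. -/
theorem imc_for_heterogeneous_class
    {Ω : Type*} [MeasurableSpace Ω] (μ : Measure Ω) [IsProbabilityMeasure μ]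
    (m : ℕ) (p : Fin m → Ω → ℝ) (hmeas : ∀ i, Measurable (p i))
    (hindep : iIndepFun p μ)
    (hrange : ∀ i, ∀ᵐ ω ∂μ, p i ω ∈ Set.Icc (0:ℝ) 1)
    (H₀ : Finset (Fin m)) (m₀ : ℕ) (hcard : H₀.card = m₀) (hm₀ : 1 ≤ m₀)
    (hsup : ∀ h ∈ H₀, ∀ t ∈ Set.Icc (0:ℝ) 1, μ {ω | p h ω ≤ t} ≤ ENNReal.ofReal t)
    (g : Fin m → ℝ → ℝ) (hmono : ∀ i, MonotoneOn (g i) (Set.Icc 0 1))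
    (hg01 : ∀ i, ∀ u ∈ Set.Icc (0:ℝ) 1, g i u ∈ Set.Icc (0:ℝ) 1)
    (ν : Fin m → ℝ) (hν : ∀ i, ν i = ∫ u in (0:ℝ)..1, g i u) (hνpos : ∀ i, 0 < ν i) :
    ∀ h ∈ H₀,
      ∫ ω, (1 / (⨅ i, ν i) + (g h 0 / ν h
          + ∑ i ∈ Finset.univ.erase h, g i (p i ω) / ν i))⁻¹ ∂μ ≤ 1 / (m₀ : ℝ) := by
  classical
  intro h hh
  haveI : Nonempty (Fin m) := ⟨h⟩
  set q : ℝ := ⨅ i, ν i with hqdef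
  obtain ⟨i₀, hi₀⟩ := exists_eq_ciInf_of_finite (f := ν)
  have hq_pos : 0 < q := by rw [hqdef, ← hi₀]; exact hνpos i₀
  have hq_le : ∀ i, q ≤ ν i := fun i => ciInf_le (Finite.bddBelow_range ν) i
  -- clamped transformations
  set G : Fin m → ℝ → ℝ := fun i => g i ∘ clampI with hGdef
  have hGmono : ∀ i, Monotone (G i) := fun i x y hxy =>
    hmono i (clampI_mem x) (clampI_mem y) (clampI_monotone hxy)
  have hG01 : ∀ i u, G i u ∈ Icc (0:ℝ) 1 := fun i u => hg01 i _ (clampI_mem u)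
  have hGeq : ∀ i, ∀ u ∈ Icc (0:ℝ) 1, G i u = g i u := fun i u hu => by
    simp only [hGdef, Function.comp_apply, clampI_eq hu]
  have hGmeas : ∀ i, Measurable (G i) := fun i => (hGmono i).measurable
  have hν' : ∀ i, ν i = ∫ u in Ioc (0:ℝ) 1, G i u := by
    intro i
    rw [hν i, intervalIntegral.integral_of_le zero_le_one]
    exact (setIntegral_congr_fun measurableSet_Ioc
      (fun u hu => (hGeq i u ⟨hu.1.le, hu.2⟩).symm))
  have hmean : ∀ i ∈ H₀, ν i ≤ ∫ ω, G i (p i ω) ∂μ := fun i hi => by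
    rw [hν' i]
    exact mean_ge_int μ (p i) (hmeas i) (hsup i hi) (G i) (hGmono i) (fun u => hG01 i u)
  have hν_le_one : ∀ i, ν i ≤ 1 := by
    intro i
    rw [hν' i]
    have hint1 : IntegrableOn (G i) (Ioc (0:ℝ) 1) := by
      refine Integrable.mono' (integrable_const 1) (hGmeas i).aestronglyMeasurable.restrict ?_
      exact Filter.Eventually.of_forall fun u => by
        rw [Real.norm_eq_abs, abs_of_nonneg (hG01 i u).1]; exact (hG01 i u).2
    calc ∫ u in Ioc (0:ℝ) 1, G i u ≤ ∫ _u in Ioc (0:ℝ) 1, (1:ℝ) :=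
          setIntegral_mono_on hint1 (integrableOn_const (by simp))
            measurableSet_Ioc (fun u _ => (hG01 i u).2)
      _ = 1 := by simp [Real.volume_Ioc]
  have hq_le_one : q ≤ 1 := le_trans (hq_le h) (hν_le_one h)
  set c : ℝ := 1 / q with hcdef
  have hc_pos : 0 < c := by rw [hcdef]; positivity
  have hc_inv : c⁻¹ = q := by rw [hcdef, one_div, inv_inv]
  -- the deterministic part
  set A : ℝ := 1 / q + g h 0 / ν h with hAdef
  have hgh0 : g h 0 ∈ Icc (0:ℝ) 1 := hg01 h 0 ⟨le_rfl, zero_le_one⟩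
  have hcA : c ≤ A := by
    rw [hAdef, hcdef]
    nlinarith [hgh0.1, (hνpos h), div_nonneg hgh0.1 (hνpos h).le]
  -- the random denominators
  set T : Finset (Fin m) := Finset.univ.erase h with hTdef
  set D : Ω → ℝ := fun ω => A + ∑ i ∈ T, G i (p i ω) / ν i with hDdef
  have hterm_nonneg : ∀ i ω, 0 ≤ G i (p i ω) / ν i := fun i ω =>
    div_nonneg (hG01 i _).1 (hνpos i).le
  have hterm_le : ∀ i ω, G i (p i ω) / ν i ≤ c := by
    intro i ω
    calc G i (p i ω) / ν i ≤ 1 / ν i :=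
          (div_le_div_iff_of_pos_right (hνpos i)).2 (hG01 i _).2
      _ ≤ 1 / q := one_div_le_one_div_of_le hq_pos (hq_le i)
      _ = c := hcdef.symm
  have hD_lb : ∀ ω, c ≤ D ω := by
    intro ω
    simp only [hDdef]
    have : (0:ℝ) ≤ ∑ i ∈ T, G i (p i ω) / ν i :=
      Finset.sum_nonneg fun i _ => hterm_nonneg i ω
    exact hcA.trans (le_add_of_nonneg_right this)
  have hD_pos : ∀ ω, 0 < D ω := fun ω => lt_of_lt_of_le hc_pos (hD_lb ω)
  have hD_meas : Measurable D := by
    rw [hDdef]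
    exact measurable_const.add
      (Finset.measurable_sum T fun i _ => ((hGmeas i).comp (hmeas i)).div_const (ν i))
  -- replace g by G a.e.
  have haeIcc : ∀ᵐ ω ∂μ, ∀ i, p i ω ∈ Icc (0:ℝ) 1 := ae_all_iff.2 hrange
  have hae : (fun ω => (1 / q + (g h 0 / ν h
        + ∑ i ∈ Finset.univ.erase h, g i (p i ω) / ν i))⁻¹)
      =ᵐ[μ] fun ω => (D ω)⁻¹ := by
    filter_upwards [haeIcc] with ω hω
    have hsum : ∑ i ∈ Finset.univ.erase h, g i (p i ω) / ν i
        = ∑ i ∈ T, G i (p i ω) / ν i :=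
      Finset.sum_congr hTdef.symm fun i _ => by rw [hGeq i _ (hω i)]
    rw [hsum, hDdef]
    dsimp only
    rw [hAdef, add_assoc]
  rw [integral_congr_ae hae]
  -- to lintegral
  have hinv_nonneg : ∀ ω, (0:ℝ) ≤ (D ω)⁻¹ := fun ω => (inv_nonneg).2 (hD_pos ω).le
  have hinv_le : ∀ ω, (D ω)⁻¹ ≤ q := by
    intro ω
    calc (D ω)⁻¹ ≤ c⁻¹ := inv_anti₀ hc_pos (hD_lb ω)
      _ = q := hc_inv
  have hint_inv : Integrable (fun ω => (D ω)⁻¹) μ :=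
    integrable_of_bd hD_meas.inv q (Filter.Eventually.of_forall fun ω => by
      rw [abs_of_nonneg (hinv_nonneg ω)]; exact hinv_le ω)
  rw [← ENNReal.ofReal_le_ofReal_iff (by positivity : (0:ℝ) ≤ 1 / (m₀:ℝ)),
    ofReal_integral_eq_lintegral_ofReal hint_inv
      (Filter.Eventually.of_forall hinv_nonneg)]
  rw [lintegral_congr fun ω => ofReal_inv_eq_lintegral_exp (hD_pos ω)]
  -- swap
  have hprod_meas : AEMeasurable (Function.uncurry fun ω s =>
      ENNReal.ofReal (Real.exp (-(D ω * s)))) (μ.prod (volume.restrict (Ioi 0))) := by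
    apply Measurable.aemeasurable
    exact ENNReal.measurable_ofReal.comp (Real.measurable_exp.comp
      ((hD_meas.comp measurable_fst).mul measurable_snd).neg)
  rw [lintegral_lintegral_swap hprod_meas]
  -- pointwise bound in s
  set k : ℕ := m₀ - 1 with hkdef
  have hm₀k : (m₀ : ℝ) = (k : ℝ) + 1 := by
    rw [hkdef]
    exact_mod_cast (Nat.succ_pred_eq_of_pos hm₀).symm
  have hexp_meas : Measurable fun s : ℝ => Real.exp (-(c * s)) :=
    Real.measurable_exp.comp (measurable_id.const_mul c).neg
  set Φ : ℝ → ENNReal := fun s =>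
    ENNReal.ofReal (Real.exp (-(c*s)) * (1 - q * (1 - Real.exp (-(c*s))))^k) with hΦdef
  have hΦmeas : Measurable Φ := by
    rw [hΦdef]
    exact ENNReal.measurable_ofReal.comp (hexp_meas.mul
      ((measurable_const.sub ((measurable_const.sub hexp_meas).const_mul q)).pow_const k))
  have hφ_nonneg : ∀ s : ℝ, 0 ≤ 1 - q * (1 - Real.exp (-(c*s))) := by
    intro s
    nlinarith [Real.exp_nonneg (-(c*s)), mul_nonneg hq_pos.le (Real.exp_nonneg (-(c*s)))]
  have hinner : ∀ s ∈ Ioi (0:ℝ),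
      ∫⁻ ω, ENNReal.ofReal (Real.exp (-(D ω * s))) ∂μ ≤ Φ s := by
    intro s hs
    have hs0 : (0:ℝ) ≤ s := (le_of_lt hs)
    set f : Fin m → ℝ → ENNReal :=
      fun i x => ENNReal.ofReal (Real.exp (-(G i x / ν i * s))) with hfdef
    have hfmeas : ∀ i, Measurable (f i) := fun i =>
      ENNReal.measurable_ofReal.comp (Real.measurable_exp.comp
        (((hGmeas i).div_const (ν i)).mul_const s).neg)
    have hstep_a : ∀ ω, ENNReal.ofReal (Real.exp (-(D ω * s)))
        = ENNReal.ofReal (Real.exp (-(A * s))) * ∏ i ∈ T, f i (p i ω) := by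
      intro ω
      rw [hDdef]
      dsimp only
      calc ENNReal.ofReal (Real.exp (-((A + ∑ i ∈ T, G i (p i ω) / ν i) * s)))
          = ENNReal.ofReal (Real.exp (-(A*s))
              * ∏ i ∈ T, Real.exp (-(G i (p i ω) / ν i * s))) := by
            rw [← Real.exp_sum, ← Real.exp_add]
            congr 1
            rw [add_mul, Finset.sum_mul, neg_add, Finset.sum_neg_distrib]
        _ = ENNReal.ofReal (Real.exp (-(A*s)))
              * ∏ i ∈ T, f i (p i ω) := by
            rw [ENNReal.ofReal_mul (Real.exp_nonneg _),
              ENNReal.ofReal_prod_of_nonneg (fun i _ => Real.exp_nonneg _)]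
    have hFmeas : ∀ i, Measurable (fun ω => f i (p i ω)) := fun i =>
      (hfmeas i).comp (hmeas i)
    have hFindep : iIndepFun (fun i ω => f i (p i ω)) μ :=
      hindep.comp f hfmeas
    calc ∫⁻ ω, ENNReal.ofReal (Real.exp (-(D ω * s))) ∂μ
        = ∫⁻ ω, ENNReal.ofReal (Real.exp (-(A * s))) * ∏ i ∈ T, f i (p i ω) ∂μ :=
          lintegral_congr hstep_a
      _ = ENNReal.ofReal (Real.exp (-(A * s)))
            * ∫⁻ ω, ∏ i ∈ T, f i (p i ω) ∂μ := by
          rw [lintegral_const_mul _ (Finset.measurable_prod T fun i _ => hFmeas i)]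
      _ = ENNReal.ofReal (Real.exp (-(A * s)))
            * ∏ i ∈ T, ∫⁻ ω, f i (p i ω) ∂μ := by
          rw [lintegral_prod_indep hFmeas hFindep T]
      _ ≤ ENNReal.ofReal (Real.exp (-(c * s)))
            * ∏ i ∈ T, (if i ∈ H₀ then ENNReal.ofReal (1 - q * (1 - Real.exp (-(c*s)))) else 1) := by
          refine mul_le_mul' (ENNReal.ofReal_le_ofReal (Real.exp_le_exp.2 ?_)) ?_
          · have := mul_le_mul_of_nonneg_right hcA hs0
            linarith
          refine Finset.prod_le_prod' fun i hiT => ?_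
          by_cases hiH : i ∈ H₀
          · simp only [hiH, if_true]
            set Y : Ω → ℝ := fun ω => G i (p i ω) / ν i with hYdef
            have hYmeas : Measurable Y := ((hGmeas i).comp (hmeas i)).div_const (ν i)
            have hEY : 1 ≤ ∫ ω, Y ω ∂μ := by
              rw [hYdef]
              dsimp only
              rw [integral_div]
              exact (one_le_div (hνpos i)).2 (hmean i hiH)
            have hbound := null_factor_bound μ hYmeas hc_pos
              (fun ω => hterm_nonneg i ω) (fun ω => hterm_le i ω) hEY hs0
            have hexp_int : Integrable (fun ω => Real.exp (-(Y ω * s))) μ := by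
              refine integrable_of_bd (Real.measurable_exp.comp (hYmeas.mul_const s).neg) 1
                (Filter.Eventually.of_forall fun ω => ?_)
              rw [abs_of_nonneg (Real.exp_nonneg _)]
              calc Real.exp (-(Y ω * s)) ≤ Real.exp 0 :=
                    Real.exp_le_exp.2 (by nlinarith [hterm_nonneg i ω])
                _ = 1 := Real.exp_zero
            have : ∫⁻ ω, f i (p i ω) ∂μ
                = ENNReal.ofReal (∫ ω, Real.exp (-(Y ω * s)) ∂μ) := by
              rw [ofReal_integral_eq_lintegral_ofReal hexp_int
                (Filter.Eventually.of_forall fun ω => Real.exp_nonneg _)]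
            rw [this]
            refine ENNReal.ofReal_le_ofReal (le_trans hbound ?_)
            rw [← hc_inv]
            rw [inv_eq_one_div]
          · simp only [hiH, if_false]
            calc ∫⁻ ω, f i (p i ω) ∂μ ≤ ∫⁻ _ω, 1 ∂μ := by
                  refine lintegral_mono fun ω => ?_
                  rw [hfdef]
                  dsimp only
                  refine ENNReal.ofReal_le_one.2 ?_
                  calc Real.exp (-(G i (p i ω) / ν i * s)) ≤ Real.exp 0 :=
                        Real.exp_le_exp.2 (by nlinarith [hterm_nonneg i ω])
                    _ = 1 := Real.exp_zero
              _ = 1 := by simp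
      _ = Φ s := by
          have hfilter : T.filter (· ∈ H₀) = H₀.erase h := by
            ext i
            simp only [hTdef, Finset.mem_filter, Finset.mem_erase, Finset.mem_univ,
              and_true, true_and]
          rw [Finset.prod_ite, Finset.prod_const, Finset.prod_const_one, mul_one, hfilter,
            Finset.card_erase_of_mem hh, hcard, hΦdef, ← ENNReal.ofReal_pow (hφ_nonneg s),
            ← ENNReal.ofReal_mul (Real.exp_nonneg _)]
  refine le_trans (setLIntegral_mono hΦmeas hinner) ?_
  -- final computation
  set a : ℕ → ℝ := fun j => (k.choose j : ℝ) * q^j * (1-q)^(k-j) with hadef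
  have hsum_eq : ∀ s : ℝ, Real.exp (-(c*s)) * (1 - q * (1 - Real.exp (-(c*s))))^k
      = ∑ j ∈ Finset.range (k+1), a j * Real.exp (-(((j:ℝ)+1) * c * s)) := by
    intro s
    have h1 : 1 - q * (1 - Real.exp (-(c*s))) = q * Real.exp (-(c*s)) + (1 - q) := by ring
    rw [h1, add_pow, Finset.mul_sum]
    refine Finset.sum_congr rfl fun j hj => ?_
    have hexpj : Real.exp (-(((j:ℝ)+1) * c * s)) = Real.exp (-(c*s)) * Real.exp (-(c*s))^j := by
      rw [← Real.exp_nat_mul, ← Real.exp_add]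
      congr 1
      ring
    rw [hadef]
    dsimp only
    rw [hexpj, mul_pow]
    ring
  have hInt : ∀ j ∈ Finset.range (k+1),
      IntegrableOn (fun s => a j * Real.exp (-(((j:ℝ)+1) * c * s))) (Ioi (0:ℝ)) := by
    intro j _
    have hb : (0:ℝ) < ((j:ℝ)+1) * c := by positivity
    have := (exp_neg_integrableOn_Ioi 0 hb).const_mul (a j)
    simp only [neg_mul] at this ⊢
    exact this
  have hIntSum : IntegrableOn
      (fun s => Real.exp (-(c*s)) * (1 - q * (1 - Real.exp (-(c*s))))^k) (Ioi (0:ℝ)) := by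
    rw [show (fun s => Real.exp (-(c*s)) * (1 - q * (1 - Real.exp (-(c*s))))^k)
        = fun s => ∑ j ∈ Finset.range (k+1), a j * Real.exp (-(((j:ℝ)+1) * c * s)) from
      funext hsum_eq]
    exact integrable_finset_sum _ hInt
  have hnn : 0 ≤ᵐ[volume.restrict (Ioi (0:ℝ))]
      fun s => Real.exp (-(c*s)) * (1 - q * (1 - Real.exp (-(c*s))))^k :=
    Filter.Eventually.of_forall fun s =>
      mul_nonneg (Real.exp_nonneg _) (pow_nonneg (hφ_nonneg s) k)
  have hΦrw : ∫⁻ s in Ioi (0:ℝ), Φ s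
      = ENNReal.ofReal (∫ s in Ioi (0:ℝ),
          Real.exp (-(c*s)) * (1 - q * (1 - Real.exp (-(c*s))))^k) := by
    rw [ofReal_integral_eq_lintegral_ofReal hIntSum hnn]
  rw [hΦrw]
  refine ENNReal.ofReal_le_ofReal ?_
  have hint_eq : ∫ s in Ioi (0:ℝ), Real.exp (-(c*s)) * (1 - q * (1 - Real.exp (-(c*s))))^k
      = ∑ j ∈ Finset.range (k+1), a j * (1/(((j:ℝ)+1)*c)) := by
    rw [show (fun s => Real.exp (-(c*s)) * (1 - q * (1 - Real.exp (-(c*s))))^k)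
        = fun s => ∑ j ∈ Finset.range (k+1), a j * Real.exp (-(((j:ℝ)+1) * c * s)) from
      funext hsum_eq]
    rw [integral_finset_sum _ hInt]
    refine Finset.sum_congr rfl fun j _ => ?_
    have hb : (0:ℝ) < ((j:ℝ)+1) * c := by positivity
    rw [integral_const_mul]
    rw [show (fun s : ℝ => Real.exp (-(((j:ℝ)+1) * c * s)))
        = fun s : ℝ => Real.exp (-((((j:ℝ)+1) * c) * s)) from funext fun s => by rw [mul_assoc]]
    rw [integral_exp_neg_mul_Ioi hb]
  rw [hint_eq, hm₀k, hcdef]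
  have := sum_bound k q hq_pos hq_le_one
  calc ∑ j ∈ Finset.range (k+1), a j * (1/(((j:ℝ)+1)*(1/q)))
      = ∑ j ∈ Finset.range (k+1),
          (k.choose j : ℝ) * q^j * (1-q)^(k-j) * (1/(((j:ℝ)+1)*(1/q))) := by
        refine Finset.sum_congr rfl fun j _ => ?_
        rw [hadef]
    _ ≤ 1 / ((k:ℝ)+1) := this
end

section
/- Let m̂₁ = 1/ν + Σᵢ gᵢ(pᵢ)/νᵢ and m̂₂ = 1/μ + Σᵢ hᵢ(pᵢ)/μᵢ with gᵢ, hᵢ : [0,1] → [0,1] non-decreasing, νᵢ = ∫₀¹ gᵢ > 0, μᵢ = ∫₀¹ hᵢ > 0, ν = min νᵢ, μ = min μᵢ. For λ ∈ [0,1] let fᵢ = κᵢ gᵢ + (1-κᵢ) hᵢ with κᵢ = λμᵢ/(λμᵢ + (1-λ)νᵢ) and εᵢ = ∫₀¹ fᵢ. Then λ·m̂₁ + (1-λ)·m̂₂ ≥ 1/min(ε₁,…,εₘ) + Σᵢ fᵢ(pᵢ)/εᵢ pointwise on [0,1]^m. -/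
open MeasureTheory Set

/-- A convex combination of two heterogeneous estimators dominates, pointwise
on `[0,1]^m`, an estimator of the class `F` built from the mixed transformations
`fᵢ = κᵢ gᵢ + (1-κᵢ) hᵢ`. -/
theorem convex_combination_dominates_class_F_estimator
    (m : ℕ) (g h : Fin m → ℝ → ℝ)
    (hg : ∀ i, MonotoneOn (g i) (Set.Icc 0 1)) (hh : ∀ i, MonotoneOn (h i) (Set.Icc 0 1))
    (hg01 : ∀ i, ∀ u ∈ Set.Icc (0:ℝ) 1, g i u ∈ Set.Icc (0:ℝ) 1)
    (hh01 : ∀ i, ∀ u ∈ Set.Icc (0:ℝ) 1, h i u ∈ Set.Icc (0:ℝ) 1)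
    (ν μ : Fin m → ℝ)
    (hν : ∀ i, ν i = ∫ u in (0:ℝ)..1, g i u) (hνpos : ∀ i, 0 < ν i)
    (hμ : ∀ i, μ i = ∫ u in (0:ℝ)..1, h i u) (hμpos : ∀ i, 0 < μ i)
    (lam : ℝ) (hlam : lam ∈ Set.Icc (0:ℝ) 1)
    (κ : Fin m → ℝ) (hκ : ∀ i, κ i = lam * μ i / (lam * μ i + (1 - lam) * ν i))
    (f : Fin m → ℝ → ℝ) (hf : ∀ i u, f i u = κ i * g i u + (1 - κ i) * h i u)
    (ε : Fin m → ℝ) (hε : ∀ i, ε i = ∫ u in (0:ℝ)..1, f i u) :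
    ∀ p : Fin m → ℝ, (∀ i, p i ∈ Set.Icc (0:ℝ) 1) →
      1 / (⨅ i, ε i) + ∑ i, f i (p i) / ε i ≤
        lam * (1 / (⨅ i, ν i) + ∑ i, g i (p i) / ν i) +
          (1 - lam) * (1 / (⨅ i, μ i) + ∑ i, h i (p i) / μ i) := by
  intro p hp
  obtain ⟨h0, h1⟩ := hlam
  rcases Nat.eq_zero_or_pos m with hm | hm
  · subst hm
    simp [Real.iInf_of_isEmpty]
  haveI : Nonempty (Fin m) := ⟨⟨0, hm⟩⟩
  have hgi : ∀ i, IntervalIntegrable (g i) MeasureTheory.volume 0 1 := fun i => by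
    apply MonotoneOn.intervalIntegrable
    rw [Set.uIcc_of_le (zero_le_one)]; exact hg i
  have hhi : ∀ i, IntervalIntegrable (h i) MeasureTheory.volume 0 1 := fun i => by
    apply MonotoneOn.intervalIntegrable
    rw [Set.uIcc_of_le (zero_le_one)]; exact hh i
  have hD : ∀ i, 0 < lam * μ i + (1 - lam) * ν i := fun i => by
    rcases eq_or_lt_of_le h0 with hl | hl
    · rw [← hl]; simpa using hνpos i
    · have := mul_pos hl (hμpos i)
      have := mul_nonneg (sub_nonneg.2 h1) (hνpos i).le
      linarith
  have hεi : ∀ i, ε i = κ i * ν i + (1 - κ i) * μ i := fun i => by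
    rw [hε, hν, hμ]
    simp_rw [hf]
    rw [intervalIntegral.integral_add (((hgi i)).const_mul _) (((hhi i)).const_mul _),
      intervalIntegral.integral_const_mul, intervalIntegral.integral_const_mul]
  have hεval : ∀ i, ε i = ν i * μ i / (lam * μ i + (1 - lam) * ν i) := fun i => by
    have hDne := (hD i).ne'
    rw [hεi i, hκ i]
    field_simp
    ring
  have hεpos : ∀ i, 0 < ε i := fun i => by
    rw [hεval i]
    exact div_pos (mul_pos (hνpos i) (hμpos i)) (hD i)
  have hkey : ∀ i u, f i u / ε i = lam * (g i u / ν i) + (1 - lam) * (h i u / μ i) :=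
    fun i u => by
      have hDne := (hD i).ne'
      have hνne := (hνpos i).ne'
      have hμne := (hμpos i).ne'
      rw [hf, hεval, hκ]
      field_simp
      ring
  have h1ε : ∀ i, 1 / ε i = lam / ν i + (1 - lam) / μ i := fun i => by
    have hDne := (hD i).ne'
    have hνne := (hνpos i).ne'
    have hμne := (hμpos i).ne'
    rw [hεval]
    field_simp
  have hsum : ∑ i, f i (p i) / ε i
      = lam * ∑ i, g i (p i) / ν i + (1 - lam) * ∑ i, h i (p i) / μ i := by
    rw [Finset.mul_sum, Finset.mul_sum, ← Finset.sum_add_distrib]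
    exact Finset.sum_congr rfl fun i _ => hkey i (p i)
  -- infimum facts
  obtain ⟨i₀, hi₀⟩ := Finite.exists_min ε
  have hεinf : ⨅ i, ε i = ε i₀ :=
    le_antisymm (ciInf_le (Finite.bddBelow_range ε) i₀) (le_ciInf hi₀)
  obtain ⟨j, hj⟩ := Finite.exists_min ν
  have hνinf : ⨅ i, ν i = ν j :=
    le_antisymm (ciInf_le (Finite.bddBelow_range ν) j) (le_ciInf hj)
  obtain ⟨k, hk⟩ := Finite.exists_min μ
  have hμinf : ⨅ i, μ i = μ k :=
    le_antisymm (ciInf_le (Finite.bddBelow_range μ) k) (le_ciInf hk)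
  have hνinfpos : 0 < ⨅ i, ν i := hνinf ▸ hνpos j
  have hμinfpos : 0 < ⨅ i, μ i := hμinf ▸ hμpos k
  have hν0 : 1 / ν i₀ ≤ 1 / ⨅ i, ν i :=
    one_div_le_one_div_of_le hνinfpos (hνinf ▸ hj i₀)
  have hμ0 : 1 / μ i₀ ≤ 1 / ⨅ i, μ i :=
    one_div_le_one_div_of_le hμinfpos (hμinf ▸ hk i₀)
  have hconst : 1 / (⨅ i, ε i) ≤ lam / (⨅ i, ν i) + (1 - lam) / (⨅ i, μ i) := by
    rw [hεinf, h1ε i₀]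
    have h1 : lam / ν i₀ ≤ lam / ⨅ i, ν i := by
      gcongr
      exact hνinf ▸ hj i₀
    have h2 : (1 - lam) / μ i₀ ≤ (1 - lam) / ⨅ i, μ i := by
      gcongr
      · exact hμinf ▸ hk i₀
    linarith
  have : lam / (⨅ i, ν i) = lam * (1 / ⨅ i, ν i) := by ring
  have : (1 - lam) / (⨅ i, μ i) = (1 - lam) * (1 / ⨅ i, μ i) := by ring
  nlinarith [hconst, hsum]
end
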